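/- arXiv:2212.14666 — 2 statements merged into one kernel-verified Lean document; each statement's English description precedes it below -/
import Mathlib

section
/- For all n ≥ 1, r ≥ 1 and k ≥ 2, t(n,k,r) = ∑_{a ≥ r} (-1)^{a-r} e_{a-r}(1,2,…,a-1) · ∑_{λ ⊢ n, l(λ)=a} f_λ ∏_{j=1}^{l(λ)} t(λ_j, k-1, 1), where the inner sum is over integer partitions λ of n of length a and e_m denotes the elementary symmetric polynomial of degree m evaluated at 1,2,…,a-1. -/
open Finset

/-- Stirling numbers of the second kind: the number of partitions (equivalence
relations) of an `n`-element set into `r` nonempty blocks. -/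
noncomputable def stirS2 (n r : ℕ) : ℕ :=
  Nat.card {p : Setoid (Fin n) // Nat.card (Quotient p) = r}

/-- Signed Stirling numbers of the first kind, defined by
`x(x-1)⋯(x-n+1) = ∑_{r=0}^{n} s(n,r) xʳ`. -/
noncomputable def stirS1 (n r : ℕ) : ℤ :=
  (∏ i ∈ Finset.range n, (Polynomial.X - Polynomial.C (i : ℤ))).coeff r

/-- `Tnum n k r = T(n,k,r) = ∑_{n ≥ i_1 ≥ … ≥ i_{k-1} ≥ r} ∏_{j=1}^{k} S(i_{j-1}, i_j)`
(with `i_0 = n`, `i_k = r`), written via the equivalent recursion on `k`. -/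
noncomputable def Tnum : ℕ → ℕ → ℕ → ℕ
  | n, 0, r => if n = r then 1 else 0
  | n, k + 1, r => ∑ m ∈ Finset.Icc r n, stirS2 n m * Tnum m k r

/-- `tnum n k r = t(n,k,r) = ∑_{n ≥ i_1 ≥ … ≥ i_{k-1} ≥ r} ∏_{j=1}^{k} s(i_{j-1}, i_j)`
(with `i_0 = n`, `i_k = r`), written via the equivalent recursion on `k`. -/
noncomputable def tnum : ℕ → ℕ → ℕ → ℤ
  | n, 0, r => if n = r then 1 else 0
  | n, k + 1, r => ∑ m ∈ Finset.Icc r n, stirS1 n m * tnum m k r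

/-- `f_λ = n! / (∏_j (j!)^{m_j} · m_j!)` where `m_j` is the multiplicity of the
part `j` in the integer partition `λ` of `n`. -/
noncomputable def fPart (n : ℕ) (P : Nat.Partition n) : ℚ :=
  (n.factorial : ℚ) /
    ∏ j ∈ Finset.range (n + 1),
      ((j.factorial : ℚ) ^ (P.parts.count j) * ((P.parts.count j).factorial : ℚ))

/-- `g_λ = (l(λ) - 1)! · f_λ`. -/
noncomputable def gPart (n : ℕ) (P : Nat.Partition n) : ℚ :=
  ((Multiset.card P.parts - 1).factorial : ℚ) * fPart n P

/-- The elementary symmetric polynomial `e_m(1, 2, …, N)`. -/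
noncomputable def esymQ (m N : ℕ) : ℚ :=
  ∑ s ∈ Finset.powersetCard m (Finset.Icc 1 N), ∏ i ∈ s, (i : ℚ)

/-! ### Auxiliary material: Stirling numbers of the first kind -/

open PowerSeries

lemma stirS1_of_lt {n r : ℕ} (h : n < r) : stirS1 n r = 0 := by
  unfold stirS1
  apply Polynomial.coeff_eq_zero_of_natDegree_lt
  calc (∏ i ∈ Finset.range n, (Polynomial.X - Polynomial.C (i : ℤ))).natDegree
      ≤ ∑ i ∈ Finset.range n, (Polynomial.X - Polynomial.C (i : ℤ)).natDegree :=
        Polynomial.natDegree_prod_le _ _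
    _ ≤ ∑ i ∈ Finset.range n, 1 := by
        exact Finset.sum_le_sum fun i _ => le_of_eq (Polynomial.natDegree_X_sub_C _)
    _ = n := by simp
    _ < r := h

lemma stirS1_succ (n r : ℕ) :
    stirS1 (n + 1) (r + 1) = stirS1 n r - n * stirS1 n (r + 1) := by
  unfold stirS1
  rw [Finset.prod_range_succ, Polynomial.coeff_mul_X_sub_C]
  ring

lemma stirS1_zero_right {n : ℕ} (hn : 1 ≤ n) : stirS1 n 0 = 0 := by
  unfold stirS1
  rw [Polynomial.coeff_zero_eq_eval_zero, Polynomial.eval_prod]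
  apply Finset.prod_eq_zero (Finset.mem_range.mpr hn)
  simp

lemma stirS1_zero_left (m : ℕ) : stirS1 0 m = if m = 0 then 1 else 0 := by
  unfold stirS1
  simp [Polynomial.coeff_one]

lemma stirS1_one_right (n : ℕ) : stirS1 (n + 1) 1 = (-1) ^ n * n.factorial := by
  induction n with
  | zero => simp [stirS1]
  | succ n ih =>
      have h := stirS1_succ (n + 1) 0
      rw [stirS1_zero_right (by omega)] at h
      rw [h, ih, Nat.factorial_succ]
      push_cast
      ring

/-! ### The power series `log(1+x)` and its powers -/

noncomputable def LQ : PowerSeries ℚ :=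
  PowerSeries.mk fun i => if i = 0 then 0 else (-1 : ℚ) ^ (i - 1) / i

lemma derivative_LQ : d⁄dX ℚ LQ = PowerSeries.mk fun i => (-1 : ℚ) ^ i := by
  ext n
  rw [PowerSeries.coeff_derivative]
  simp only [LQ, PowerSeries.coeff_mk, Nat.add_sub_cancel]
  have h : ((n : ℚ) + 1) ≠ 0 := by positivity
  rw [if_neg (Nat.succ_ne_zero n)]
  push_cast
  field_simp

lemma one_add_X_mul_J : (1 + X) * PowerSeries.mk (fun i => (-1 : ℚ) ^ i) = 1 := by
  ext n
  rw [add_mul, one_mul]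
  cases n with
  | zero => simp
  | succ n =>
      rw [map_add, PowerSeries.coeff_succ_X_mul]
      simp [pow_succ]

lemma deriv_LQ_pow (m : ℕ) :
    (1 + X) * (d⁄dX ℚ (LQ ^ (m + 1))) = ((m : ℚ⟦X⟧) + 1) * LQ ^ m := by
  rw [Derivation.leibniz_pow, Nat.add_sub_cancel, derivative_LQ, smul_eq_mul,
    nsmul_eq_mul]
  push_cast
  calc (1 + X) * (((m : ℚ⟦X⟧) + 1) * (LQ ^ m * PowerSeries.mk fun i => (-1 : ℚ) ^ i))
      = ((m : ℚ⟦X⟧) + 1) * LQ ^ m * ((1 + X) * PowerSeries.mk fun i => (-1 : ℚ) ^ i) := by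
        ring
    _ = ((m : ℚ⟦X⟧) + 1) * LQ ^ m := by rw [one_add_X_mul_J, mul_one]

lemma coeff_LQ_pow_rec (m n : ℕ) :
    ((n : ℚ) + 1) * PowerSeries.coeff (n + 1) (LQ ^ (m + 1)) =
      ((m : ℚ) + 1) * PowerSeries.coeff n (LQ ^ m)
        - (n : ℚ) * PowerSeries.coeff n (LQ ^ (m + 1)) := by
  have h := congrArg (PowerSeries.coeff n) (deriv_LQ_pow m)
  have hC : ((m : ℚ⟦X⟧) + 1) = PowerSeries.C ((m : ℚ) + 1) := by
    simp [map_add, map_natCast]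
  rw [hC, PowerSeries.coeff_C_mul, add_mul, one_mul, map_add] at h
  rw [PowerSeries.coeff_derivative] at h
  cases n with
  | zero =>
      simp only [Nat.cast_zero, zero_add, zero_mul, sub_zero]
      rw [PowerSeries.coeff_zero_X_mul] at h
      push_cast at h ⊢
      linarith [h]
  | succ n =>
      rw [PowerSeries.coeff_succ_X_mul, PowerSeries.coeff_derivative] at h
      push_cast at h ⊢
      linarith [h]

lemma constantCoeff_LQ : PowerSeries.constantCoeff LQ = 0 := by
  rw [← PowerSeries.coeff_zero_eq_constantCoeff]
  simp [LQ]

lemma coeff_zero_pow' (f : ℚ⟦X⟧) (m : ℕ) (hf : PowerSeries.constantCoeff f = 0) :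
    PowerSeries.coeff 0 (f ^ m) = if m = 0 then 1 else 0 := by
  rw [PowerSeries.coeff_zero_eq_constantCoeff, map_pow, hf]
  cases m <;> simp

lemma stirS1_rep (n : ℕ) :
    ∀ m, (stirS1 n m : ℚ) * m.factorial = n.factorial * PowerSeries.coeff n (LQ ^ m) := by
  induction n with
  | zero =>
      intro m
      rw [coeff_zero_pow' _ _ constantCoeff_LQ, stirS1_zero_left]
      cases m <;> simp
  | succ n ih =>
      intro m
      cases m with
      | zero =>
          rw [stirS1_zero_right (by omega)]
          simp [PowerSeries.coeff_one]
      | succ m =>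
          have h1 := ih m
          have h2 := ih (m + 1)
          have h3 := coeff_LQ_pow_rec m n
          rw [stirS1_succ n m]
          push_cast [Nat.factorial_succ] at h1 h2 ⊢
          linear_combination ((m : ℚ) + 1) * h1 - (n : ℚ) * h2 - (n.factorial : ℚ) * h3

lemma coeff_pow_eq_zero {f : ℚ⟦X⟧} (hf : PowerSeries.constantCoeff f = 0)
    {n m : ℕ} (h : n < m) : PowerSeries.coeff n (f ^ m) = 0 := by
  have hd : (X : ℚ⟦X⟧) ^ m ∣ f ^ m :=
    pow_dvd_pow_of_dvd (PowerSeries.X_dvd_iff.mpr hf) m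
  exact PowerSeries.X_pow_dvd_iff.mp hd n h

/-! ### Substitution of power series (ad hoc) -/

noncomputable def subQ (F G : ℚ⟦X⟧) : ℚ⟦X⟧ :=
  PowerSeries.mk fun n =>
    ∑ m ∈ Finset.range (n + 1), PowerSeries.coeff m F * PowerSeries.coeff n (G ^ m)

lemma coeff_subQ (F G : ℚ⟦X⟧) (n : ℕ) :
    PowerSeries.coeff n (subQ F G) =
      ∑ m ∈ Finset.range (n + 1), PowerSeries.coeff m F * PowerSeries.coeff n (G ^ m) := by
  simp [subQ]

lemma subQ_one (G : ℚ⟦X⟧) : subQ 1 G = 1 := by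
  ext n
  rw [coeff_subQ]
  rw [Finset.sum_eq_single 0]
  · simp
  · intro m _ hm
    simp [PowerSeries.coeff_one, hm]
  · intro h
    simp at h

lemma subQ_mul (F₁ F₂ G : ℚ⟦X⟧) (hG : PowerSeries.constantCoeff G = 0) :
    subQ (F₁ * F₂) G = subQ F₁ G * subQ F₂ G := by
  ext n
  rw [coeff_subQ, PowerSeries.coeff_mul]
  have hL : ∑ m ∈ Finset.range (n + 1),
      PowerSeries.coeff m (F₁ * F₂) * PowerSeries.coeff n (G ^ m)
      = ∑ i ∈ Finset.range (n + 1), ∑ j ∈ Finset.range (n + 1),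
          PowerSeries.coeff i F₁ * PowerSeries.coeff j F₂ *
            PowerSeries.coeff n (G ^ i * G ^ j) := by
    have hdisj : (↑(Finset.range (n + 1)) : Set ℕ).PairwiseDisjoint Finset.HasAntidiagonal.antidiagonal := by
      intro m₁ _ m₂ _ hne
      rw [Function.onFun, Finset.disjoint_left]
      intro p hp1 hp2
      rw [Finset.HasAntidiagonal.mem_antidiagonal] at hp1 hp2
      exact hne (hp1.symm.trans hp2)
    calc ∑ m ∈ Finset.range (n + 1),
          PowerSeries.coeff m (F₁ * F₂) * PowerSeries.coeff n (G ^ m)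
        = ∑ m ∈ Finset.range (n + 1), ∑ p ∈ Finset.HasAntidiagonal.antidiagonal m,
            PowerSeries.coeff p.1 F₁ * PowerSeries.coeff p.2 F₂ *
              PowerSeries.coeff n (G ^ p.1 * G ^ p.2) := by
          refine Finset.sum_congr rfl fun m _ => ?_
          rw [PowerSeries.coeff_mul, Finset.sum_mul]
          refine Finset.sum_congr rfl fun p hp => ?_
          rw [Finset.HasAntidiagonal.mem_antidiagonal] at hp
          rw [← pow_add, hp]
      _ = ∑ p ∈ (Finset.range (n + 1)).biUnion Finset.HasAntidiagonal.antidiagonal,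
            PowerSeries.coeff p.1 F₁ * PowerSeries.coeff p.2 F₂ *
              PowerSeries.coeff n (G ^ p.1 * G ^ p.2) :=
          (Finset.sum_biUnion hdisj).symm
      _ = ∑ p ∈ (Finset.range (n + 1)) ×ˢ (Finset.range (n + 1)),
            PowerSeries.coeff p.1 F₁ * PowerSeries.coeff p.2 F₂ *
              PowerSeries.coeff n (G ^ p.1 * G ^ p.2) := by
          refine Finset.sum_subset ?_ ?_
          · intro p hp
            rw [Finset.mem_biUnion] at hp
            obtain ⟨m, hm, hpm⟩ := hp
            rw [Finset.HasAntidiagonal.mem_antidiagonal] at hpm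
            rw [Finset.mem_range] at hm
            rw [Finset.mem_product, Finset.mem_range, Finset.mem_range]
            omega
          · intro p hp hp'
            have hgt : n < p.1 + p.2 := by
              by_contra hle
              push_neg at hle
              exact hp' (Finset.mem_biUnion.mpr ⟨p.1 + p.2,
                Finset.mem_range.mpr (by omega), Finset.HasAntidiagonal.mem_antidiagonal.mpr rfl⟩)
            rw [← pow_add, coeff_pow_eq_zero hG hgt, mul_zero]
      _ = ∑ i ∈ Finset.range (n + 1), ∑ j ∈ Finset.range (n + 1),
            PowerSeries.coeff i F₁ * PowerSeries.coeff j F₂ *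
              PowerSeries.coeff n (G ^ i * G ^ j) := Finset.sum_product _ _ _
  rw [hL]
  symm
  calc ∑ p ∈ Finset.HasAntidiagonal.antidiagonal n,
        PowerSeries.coeff p.1 (subQ F₁ G) * PowerSeries.coeff p.2 (subQ F₂ G)
      = ∑ p ∈ Finset.HasAntidiagonal.antidiagonal n, ∑ i ∈ Finset.range (n + 1), ∑ j ∈ Finset.range (n + 1),
          (PowerSeries.coeff i F₁ * PowerSeries.coeff p.1 (G ^ i)) *
            (PowerSeries.coeff j F₂ * PowerSeries.coeff p.2 (G ^ j)) := by
        refine Finset.sum_congr rfl fun p hp => ?_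
        rw [Finset.HasAntidiagonal.mem_antidiagonal] at hp
        rw [coeff_subQ, coeff_subQ]
        rw [Finset.sum_subset (Finset.range_subset_range.mpr (show p.1 + 1 ≤ n + 1 by omega))
          (fun x _ hx => ?_), Finset.sum_subset
          (Finset.range_subset_range.mpr (show p.2 + 1 ≤ n + 1 by omega)) (fun x _ hx => ?_)]
        · rw [Finset.sum_mul_sum]
        · rw [coeff_pow_eq_zero hG (by rw [Finset.mem_range] at hx; omega), mul_zero]
        · rw [coeff_pow_eq_zero hG (by rw [Finset.mem_range] at hx; omega), mul_zero]
    _ = ∑ i ∈ Finset.range (n + 1), ∑ j ∈ Finset.range (n + 1), ∑ p ∈ Finset.HasAntidiagonal.antidiagonal n,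
          (PowerSeries.coeff i F₁ * PowerSeries.coeff p.1 (G ^ i)) *
            (PowerSeries.coeff j F₂ * PowerSeries.coeff p.2 (G ^ j)) := by
        rw [Finset.sum_comm]
        exact Finset.sum_congr rfl fun i _ => Finset.sum_comm
    _ = ∑ i ∈ Finset.range (n + 1), ∑ j ∈ Finset.range (n + 1),
          PowerSeries.coeff i F₁ * PowerSeries.coeff j F₂ *
            PowerSeries.coeff n (G ^ i * G ^ j) := by
        refine Finset.sum_congr rfl fun i _ => Finset.sum_congr rfl fun j _ => ?_
        rw [PowerSeries.coeff_mul, Finset.mul_sum]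
        refine Finset.sum_congr rfl fun p _ => ?_
        ring


lemma subQ_pow (F G : ℚ⟦X⟧) (hG : PowerSeries.constantCoeff G = 0) (a : ℕ) :
    subQ (F ^ a) G = subQ F G ^ a := by
  induction a with
  | zero => simpa using subQ_one G
  | succ a ih => rw [pow_succ, pow_succ, subQ_mul _ _ _ hG, ih]

/-! ### tnum basics -/

lemma tnum_succ (n k r : ℕ) :
    tnum n (k + 1) r = ∑ m ∈ Finset.Icc r n, stirS1 n m * tnum m k r := rfl

lemma tnum_zero (n r : ℕ) : tnum n 0 r = if n = r then 1 else 0 := rfl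

lemma tnum_one (n r : ℕ) : tnum n 1 r = stirS1 n r := by
  rw [tnum_succ]
  rcases le_or_gt r n with h | h
  · rw [Finset.sum_eq_single r]
    · simp [tnum_zero]
    · intro m _ hm
      simp [tnum_zero, hm]
    · intro hr
      exact absurd (Finset.mem_Icc.mpr ⟨le_refl r, h⟩) hr
  · rw [Finset.Icc_eq_empty (by omega), Finset.sum_empty, stirS1_of_lt h]

lemma tnum_of_lt {n k r : ℕ} (hk : 1 ≤ k) (h : n < r) : tnum n k r = 0 := by
  obtain ⟨k, rfl⟩ := Nat.exists_eq_add_of_le hk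
  rw [add_comm, tnum_succ, Finset.Icc_eq_empty (by omega), Finset.sum_empty]

/-! ### The EGF of `tnum · k 1` -/

noncomputable def egfQ (g : ℕ → ℚ) : PowerSeries ℚ :=
  PowerSeries.mk fun i => g i / i.factorial

lemma coeff_egfQ (g : ℕ → ℚ) (i : ℕ) :
    PowerSeries.coeff i (egfQ g) = g i / i.factorial := by
  simp [egfQ]

noncomputable def GkQ (k : ℕ) : ℚ⟦X⟧ := egfQ fun i => (tnum i k 1 : ℚ)

lemma GkQ_def (k : ℕ) : GkQ k = egfQ fun i => (tnum i k 1 : ℚ) := rfl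

lemma GkQ_one : GkQ 1 = LQ := by
  ext i
  rw [GkQ, coeff_egfQ, tnum_one]
  cases i with
  | zero => simp [LQ, stirS1_zero_left]
  | succ i =>
      rw [stirS1_one_right]
      simp only [LQ, PowerSeries.coeff_mk, Nat.succ_ne_zero, if_false, Nat.add_sub_cancel]
      rw [Nat.factorial_succ]
      have h1 : ((i.factorial : ℚ)) ≠ 0 := by positivity
      have h2 : ((i : ℚ) + 1) ≠ 0 := by positivity
      push_cast
      field_simp

lemma constantCoeff_GkQ (k : ℕ) (hk : 1 ≤ k) :
    PowerSeries.constantCoeff (GkQ k) = 0 := by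
  rw [← PowerSeries.coeff_zero_eq_constantCoeff, GkQ, coeff_egfQ,
    tnum_of_lt hk (by omega)]
  simp

lemma GkQ_succ (k : ℕ) (hk : 1 ≤ k) : GkQ (k + 1) = subQ (GkQ k) LQ := by
  ext i
  rw [GkQ_def, coeff_egfQ, coeff_subQ, tnum_succ]
  push_cast
  rw [Finset.sum_div]
  rw [← Finset.sum_subset (fun x hx => Finset.mem_range.mpr (by rw [Finset.mem_Icc] at hx; omega) :
      ∀ x ∈ Finset.Icc 1 i, x ∈ Finset.range (i + 1))
    ?hvanish]
  case hvanish =>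
    intro m hm hm'
    have hm0 : m = 0 := by
      rw [Finset.mem_range] at hm
      rw [Finset.mem_Icc] at hm'
      omega
    subst hm0
    rw [GkQ_def, coeff_egfQ, show tnum 0 k 1 = 0 from tnum_of_lt hk (by omega)]
    simp
  refine Finset.sum_congr rfl fun m hm => ?_
  rw [GkQ_def, coeff_egfQ]
  have h := stirS1_rep i m
  have hm0 : ((m.factorial : ℚ)) ≠ 0 := by positivity
  have hi0 : ((i.factorial : ℚ)) ≠ 0 := by positivity
  field_simp
  linear_combination (tnum m k 1 : ℚ) * h

lemma rep_tnum (k : ℕ) (hk : 1 ≤ k) : ∀ n a : ℕ, 1 ≤ a →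
    (tnum n k a : ℚ) * a.factorial =
      n.factorial * PowerSeries.coeff n (GkQ k ^ a) := by
  induction k, hk using Nat.le_induction with
  | base =>
      intro n a _
      rw [GkQ_one, tnum_one]
      exact stirS1_rep n a
  | succ k hk ih =>
      intro n a ha
      rw [GkQ_succ k hk, ← subQ_pow _ _ constantCoeff_LQ, coeff_subQ, tnum_succ,
        Finset.mul_sum]
      push_cast
      rw [Finset.sum_mul]
      rw [← Finset.sum_subset (fun x hx => Finset.mem_range.mpr (by rw [Finset.mem_Icc] at hx; omega) :
        ∀ x ∈ Finset.Icc a n, x ∈ Finset.range (n + 1))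
        ?hvanish]
      case hvanish =>
        intro m hm hm'
        have hma : m < a := by
          rw [Finset.mem_range] at hm
          rw [Finset.mem_Icc] at hm'
          omega
        rw [coeff_pow_eq_zero (constantCoeff_GkQ k hk) hma, zero_mul, mul_zero]
      refine Finset.sum_congr rfl fun m hm => ?_
      have h1 := ih m a ha
      have h2 := stirS1_rep n m
      linear_combination (stirS1 n m : ℚ) * h1 + (PowerSeries.coeff m (GkQ k ^ a)) * h2

/-! ### Partition combinatorics -/

lemma parts_le_of_mem {n : ℕ} (P : Nat.Partition n) {v : ℕ} (hv : v ∈ P.parts) : v ≤ n := by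
  rw [← P.parts_sum]
  exact Multiset.single_le_sum (fun x _ => Nat.zero_le x) v hv

lemma fPart_eq (n : ℕ) (P : Nat.Partition n) :
    fPart n P = (n.factorial : ℚ) /
      ((P.parts.map fun i => (i.factorial : ℚ)).prod *
        ∏ j ∈ P.parts.toFinset, ((P.parts.count j).factorial : ℚ)) := by
  have hsub : P.parts.toFinset ⊆ Finset.range (n + 1) := by
    intro j hj
    rw [Multiset.mem_toFinset] at hj
    exact Finset.mem_range.mpr (by have := parts_le_of_mem P hj; omega)
  rw [fPart]
  congr 1
  rw [Finset.prod_mul_distrib]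
  congr 1
  · rw [Finset.prod_multiset_map_count]
    refine (Finset.prod_subset hsub fun x _ hx => ?_).symm
    rw [Multiset.count_eq_zero_of_notMem (by simpa using hx), pow_zero]
  · refine (Finset.prod_subset hsub fun x _ hx => ?_).symm
    rw [Multiset.count_eq_zero_of_notMem (by simpa using hx)]
    simp

lemma fPart_erase {n : ℕ} (P : Nat.Partition n) {v : ℕ} (hv : v ∈ P.parts)
    (Q : Nat.Partition (n - v)) (hQ : Q.parts = P.parts.erase v) :
    (P.parts.count v : ℚ) * fPart n P = (n.choose v : ℚ) * fPart (n - v) Q := by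
  classical
  have hvn : v ≤ n := parts_le_of_mem P hv
  have hvt : v ∈ P.parts.toFinset := Multiset.mem_toFinset.mpr hv
  have hc1 : 0 < P.parts.count v := Multiset.count_pos.mpr hv
  have hA : (P.parts.map fun i => (i.factorial : ℚ)).prod
      = (v.factorial : ℚ) * (Q.parts.map fun i => (i.factorial : ℚ)).prod := by
    rw [hQ]
    exact (Multiset.prod_map_erase hv).symm
  have hQc : ∀ j, j ≠ v → Q.parts.count j = P.parts.count j := by
    intro j hj
    rw [hQ, Multiset.count_erase_of_ne hj]
  have hQv : Q.parts.count v = P.parts.count v - 1 := by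
    rw [hQ, Multiset.count_erase_self]
  have hsub : Q.parts.toFinset ⊆ P.parts.toFinset := by
    intro j hj
    rw [Multiset.mem_toFinset] at hj ⊢
    rw [hQ] at hj
    exact Multiset.mem_of_mem_erase hj
  have hK' : ∏ j ∈ Q.parts.toFinset, ((Q.parts.count j).factorial : ℚ)
      = ∏ j ∈ P.parts.toFinset, ((Q.parts.count j).factorial : ℚ) :=
    Finset.prod_subset hsub fun x _ hx => by
      rw [Multiset.count_eq_zero_of_notMem (by simpa using hx)]
      simp
  have hdiff : ∏ j ∈ P.parts.toFinset \ {v}, ((Q.parts.count j).factorial : ℚ)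
      = ∏ j ∈ P.parts.toFinset \ {v}, ((P.parts.count j).factorial : ℚ) :=
    Finset.prod_congr rfl fun j hj => by
      rw [hQc j (by rw [Finset.mem_sdiff, Finset.mem_singleton] at hj; exact hj.2)]
  have hK : ∏ j ∈ P.parts.toFinset, ((P.parts.count j).factorial : ℚ)
      = (P.parts.count v : ℚ) *
        ∏ j ∈ P.parts.toFinset, ((Q.parts.count j).factorial : ℚ) := by
    rw [Finset.prod_eq_mul_prod_sdiff_singleton_of_mem hvt
      (fun j => ((P.parts.count j).factorial : ℚ)),
      Finset.prod_eq_mul_prod_sdiff_singleton_of_mem hvt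
      (fun j => ((Q.parts.count j).factorial : ℚ)), hdiff, hQv,
      ← Nat.mul_factorial_pred hc1.ne']
    push_cast
    ring
  have hchoose : (n.choose v : ℚ) * (v.factorial : ℚ) * ((n - v).factorial : ℚ)
      = (n.factorial : ℚ) := by
    exact_mod_cast congrArg (Nat.cast : ℕ → ℚ)
      (Nat.choose_mul_factorial_mul_factorial hvn)
  rw [fPart_eq, fPart_eq, hA, hK, ← hK']
  have h1 : ((v.factorial : ℚ)) ≠ 0 := by positivity
  have h2 : (Q.parts.map fun i => (i.factorial : ℚ)).prod ≠ 0 := by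
    apply Multiset.prod_ne_zero
    intro h0
    rw [Multiset.mem_map] at h0
    obtain ⟨i, _, hi⟩ := h0
    exact (show ((i.factorial : ℚ)) ≠ 0 by positivity) hi
  have h3 : ∏ j ∈ Q.parts.toFinset, ((Q.parts.count j).factorial : ℚ) ≠ 0 := by
    apply Finset.prod_ne_zero_iff.mpr
    intro j _
    positivity
  have h4 : ((P.parts.count v : ℚ)) ≠ 0 := by positivity
  rw [mul_div_assoc', mul_div_assoc',
    div_eq_div_iff (mul_ne_zero (mul_ne_zero h1 h2) (mul_ne_zero h4 h3))
      (mul_ne_zero h2 h3)]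
  linear_combination (-((P.parts.count v : ℚ) *
    (Q.parts.map fun i => (i.factorial : ℚ)).prod *
    ∏ j ∈ Q.parts.toFinset, ((Q.parts.count j).factorial : ℚ))) * hchoose

/-- Erasing a part from a partition of `n` gives a partition of `n - v`. -/
def erasePart {n : ℕ} (P : Nat.Partition n) (v : ℕ) (hv : v ∈ P.parts) :
    Nat.Partition (n - v) where
  parts := P.parts.erase v
  parts_pos := fun hi => P.parts_pos (Multiset.mem_of_mem_erase hi)
  parts_sum := by
    have h2 : v + (P.parts.erase v).sum = n := by
      rw [← Multiset.sum_cons, Multiset.cons_erase hv, P.parts_sum]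
    omega

/-- Adding a part `v` to a partition of `n - v` gives a partition of `n`. -/
def consPart {n v : ℕ} (hv1 : 0 < v) (hvn : v ≤ n) (Q : Nat.Partition (n - v)) :
    Nat.Partition n where
  parts := v ::ₘ Q.parts
  parts_pos := fun hi => by
    rcases Multiset.mem_cons.mp hi with h | h
    · rw [h]; exact hv1
    · exact Q.parts_pos h
  parts_sum := by
    rw [Multiset.sum_cons, Q.parts_sum]
    omega

lemma partition_rep (g : ℕ → ℚ) (hg : g 0 = 0) (a : ℕ) : ∀ n : ℕ,
    (∑ P ∈ Finset.univ.filter (fun P : Nat.Partition n => Multiset.card P.parts = a),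
      fPart n P * (P.parts.map g).prod) * a.factorial
      = n.factorial * PowerSeries.coeff n (egfQ g ^ a) := by
  induction a with
  | zero =>
      intro n
      rw [pow_zero, PowerSeries.coeff_one]
      cases n with
      | zero => simp [fPart]
      | succ n =>
          rw [Finset.filter_false_of_mem, Finset.sum_empty, zero_mul]
          · simp
          · intro P _
            rw [Multiset.card_eq_zero]
            intro h0
            have := P.parts_sum
            rw [h0] at this
            simp at this
  | succ a ih =>
      intro n
      -- Right-hand side
      have hR : (n.factorial : ℚ) * PowerSeries.coeff n (egfQ g ^ (a + 1)) =
          (∑ v ∈ Finset.Icc 1 n, ∑ Q ∈ Finset.univ.filter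
              (fun Q : Nat.Partition (n - v) => Multiset.card Q.parts = a),
            (n.choose v : ℚ) * g v * (fPart (n - v) Q * (Q.parts.map g).prod)) *
            a.factorial := by
        rw [pow_succ', PowerSeries.coeff_mul,
          Finset.Nat.sum_antidiagonal_eq_sum_range_succ_mk, Finset.mul_sum]
        rw [← Finset.sum_subset
          (fun x hx => Finset.mem_range.mpr (by rw [Finset.mem_Icc] at hx; omega) :
            ∀ x ∈ Finset.Icc 1 n, x ∈ Finset.range (n + 1)) ?hvan]
        case hvan =>
          intro v hv hv'
          have hv0 : v = 0 := by
            rw [Finset.mem_range] at hv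
            rw [Finset.mem_Icc] at hv'
            omega
          subst hv0
          rw [coeff_egfQ, hg, zero_div, zero_mul, mul_zero]
        rw [Finset.sum_mul]
        refine Finset.sum_congr rfl fun v hv => ?_
        rw [Finset.mem_Icc] at hv
        have ihv := ih (n - v)
        have hchoose : (n.choose v : ℚ) * (v.factorial : ℚ) * ((n - v).factorial : ℚ)
            = (n.factorial : ℚ) := by
          exact_mod_cast congrArg (Nat.cast : ℕ → ℚ)
            (Nat.choose_mul_factorial_mul_factorial hv.2)
        rw [coeff_egfQ, ← Finset.mul_sum]
        dsimp only
        have hv0 : ((v.factorial : ℚ)) ≠ 0 := by positivity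
        rw [div_mul_eq_mul_div, ← mul_div_assoc, div_eq_iff hv0]
        linear_combination (-((n.choose v : ℚ) * g v * (v.factorial : ℚ))) * ihv -
          (g v * PowerSeries.coeff (n - v) (egfQ g ^ a)) * hchoose
      rw [hR, Nat.factorial_succ]
      push_cast
      rw [← mul_assoc]
      congr 1
      have hcount : ∀ P ∈ Finset.univ.filter
          (fun P : Nat.Partition n => Multiset.card P.parts = a + 1),
          (fPart n P * (P.parts.map g).prod) * ((a : ℚ) + 1)
          = ∑ v ∈ P.parts.toFinset,
              (P.parts.count v : ℚ) * (fPart n P * (P.parts.map g).prod) := by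
        intro P hP
        rw [Finset.mem_filter] at hP
        have hsum : ∑ v ∈ P.parts.toFinset, (P.parts.count v : ℚ) = (a : ℚ) + 1 := by
          rw [← Nat.cast_sum, Multiset.toFinset_sum_count_eq, hP.2]
          push_cast
          ring
        rw [← Finset.sum_mul, hsum, mul_comm]
      rw [Finset.sum_mul, Finset.sum_congr rfl hcount, Finset.sum_sigma', Finset.sum_sigma']
      refine Finset.sum_bij'
        (fun x hx => (⟨x.2, erasePart x.1 x.2
          (Multiset.mem_toFinset.mp (Finset.mem_sigma.mp hx).2)⟩ :
            (v : ℕ) × Nat.Partition (n - v)))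
        (fun y hy => (⟨consPart
            (show 0 < y.1 from by
              have h := (Finset.mem_sigma.mp hy).1
              rw [Finset.mem_Icc] at h
              omega)
            (show y.1 ≤ n from by
              have h := (Finset.mem_sigma.mp hy).1
              rw [Finset.mem_Icc] at h
              omega) y.2, y.1⟩ : (P : Nat.Partition n) × ℕ))
        ?hi ?hj ?left ?right ?val
      case hi =>
        intro x hx
        obtain ⟨hx1, hx2⟩ := Finset.mem_sigma.mp hx
        rw [Finset.mem_filter] at hx1
        have hvmem : x.2 ∈ x.1.parts := Multiset.mem_toFinset.mp hx2
        refine Finset.mem_sigma.mpr ⟨Finset.mem_Icc.mpr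
          ⟨x.1.parts_pos hvmem, parts_le_of_mem x.1 hvmem⟩, ?_⟩
        rw [Finset.mem_filter]
        refine ⟨Finset.mem_univ _, ?_⟩
        show Multiset.card (x.1.parts.erase x.2) = a
        rw [Multiset.card_erase_of_mem hvmem, hx1.2]
        rfl
      case hj =>
        intro y hy
        obtain ⟨hy1, hy2⟩ := Finset.mem_sigma.mp hy
        rw [Finset.mem_filter] at hy2
        refine Finset.mem_sigma.mpr ⟨?_, ?_⟩
        · rw [Finset.mem_filter]
          refine ⟨Finset.mem_univ _, ?_⟩
          show Multiset.card (y.1 ::ₘ y.2.parts) = a + 1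
          rw [Multiset.card_cons, hy2.2]
        · show y.1 ∈ (y.1 ::ₘ y.2.parts).toFinset
          exact Multiset.mem_toFinset.mpr (Multiset.mem_cons_self _ _)
      case left =>
        intro x hx
        obtain ⟨P, v⟩ := x
        obtain ⟨hx1, hx2⟩ := Finset.mem_sigma.mp hx
        have hvmem : v ∈ P.parts := Multiset.mem_toFinset.mp hx2
        exact congrArg (fun P' => (⟨P', v⟩ : (_ : Nat.Partition n) × ℕ))
          (Nat.Partition.ext (Multiset.cons_erase hvmem))
      case right =>
        intro y hy
        obtain ⟨v, Q⟩ := y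
        exact congrArg (fun Q' => (⟨v, Q'⟩ : (v : ℕ) × Nat.Partition (n - v)))
          (Nat.Partition.ext (Multiset.erase_cons_head v Q.parts))
      case val =>
        intro x hx
        obtain ⟨hx1, hx2⟩ := Finset.mem_sigma.mp hx
        have hvmem : x.2 ∈ x.1.parts := Multiset.mem_toFinset.mp hx2
        have hfe := fPart_erase x.1 hvmem (erasePart x.1 x.2 hvmem) rfl
        have hprod : g x.2 * ((x.1.parts.erase x.2).map g).prod = (x.1.parts.map g).prod :=
          Multiset.prod_map_erase hvmem
        show (x.1.parts.count x.2 : ℚ) * (fPart n x.1 * (x.1.parts.map g).prod) =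
          (n.choose x.2 : ℚ) * g x.2 *
            (fPart (n - x.2) (erasePart x.1 x.2 hvmem) *
              ((x.1.parts.erase x.2).map g).prod)
        rw [← hprod]
        linear_combination (g x.2 * ((x.1.parts.erase x.2).map g).prod) * hfe

/-! ### Peeling the recursion from the back -/

lemma tnum_peel (k : ℕ) : ∀ n r : ℕ,
    tnum n (k + 1) r = ∑ a ∈ Finset.Icc r n, tnum n k a * stirS1 a r := by
  induction k with
  | zero =>
      intro n r
      rw [tnum_one]
      rcases le_or_gt r n with h | h
      · rw [Finset.sum_eq_single n]
        · simp [tnum_zero]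
        · intro a _ hne
          rw [tnum_zero, if_neg (fun hh => hne hh.symm), zero_mul]
        · intro hn
          exact absurd (Finset.mem_Icc.mpr ⟨h, le_rfl⟩) hn
      · rw [Finset.Icc_eq_empty (by omega), Finset.sum_empty, stirS1_of_lt h]
  | succ k ih =>
      intro n r
      rw [tnum_succ]
      calc ∑ m ∈ Finset.Icc r n, stirS1 n m * tnum m (k + 1) r
          = ∑ m ∈ Finset.Icc r n, ∑ a ∈ Finset.Icc r m,
              stirS1 n m * tnum m k a * stirS1 a r := by
            refine Finset.sum_congr rfl fun m _ => ?_
            rw [ih m r, Finset.mul_sum]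
            exact Finset.sum_congr rfl fun a _ => by ring
        _ = ∑ a ∈ Finset.Icc r n, ∑ m ∈ Finset.Icc a n,
              stirS1 n m * tnum m k a * stirS1 a r := by
            refine Finset.sum_comm' fun m a => ?_
            simp only [Finset.mem_Icc]
            omega
        _ = ∑ a ∈ Finset.Icc r n, tnum n (k + 1) a * stirS1 a r := by
            refine Finset.sum_congr rfl fun a _ => ?_
            rw [tnum_succ, Finset.sum_mul]

/-! ### Stirling numbers and elementary symmetric polynomials -/

lemma sum_powersetCard_range (a m : ℕ) (ha : 1 ≤ a) :
    ∑ t ∈ Finset.powersetCard m (Finset.range a), ∏ i ∈ t, (i : ℚ) = esymQ m (a - 1) := by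
  have hins : Finset.range a = insert 0 (Finset.Icc 1 (a - 1)) := by
    ext x
    simp only [Finset.mem_range, Finset.mem_insert, Finset.mem_Icc]
    omega
  have h0 : (0 : ℕ) ∉ Finset.Icc 1 (a - 1) := by simp
  cases m with
  | zero => simp [esymQ]
  | succ m =>
      have hdisj : Disjoint (Finset.powersetCard (m + 1) (Finset.Icc 1 (a - 1)))
          ((Finset.powersetCard m (Finset.Icc 1 (a - 1))).image (insert 0)) := by
        rw [Finset.disjoint_left]
        intro t ht htu
        rw [Finset.mem_powersetCard] at ht
        rw [Finset.mem_image] at htu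
        obtain ⟨u, _, rfl⟩ := htu
        exact h0 (ht.1 (Finset.mem_insert_self 0 u))
      have hinj : ∀ t ∈ Finset.powersetCard m (Finset.Icc 1 (a - 1)),
          ∀ u ∈ Finset.powersetCard m (Finset.Icc 1 (a - 1)),
          insert 0 t = insert 0 u → t = u := by
        intro t ht u hu htu
        rw [Finset.mem_powersetCard] at ht hu
        have h0t : 0 ∉ t := fun h => h0 (ht.1 h)
        have h0u : 0 ∉ u := fun h => h0 (hu.1 h)
        rw [← Finset.erase_insert h0t, ← Finset.erase_insert h0u, htu]
      rw [hins, esymQ, Finset.powersetCard_succ_insert h0, Finset.sum_union hdisj,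
        Finset.sum_image hinj]
      have hz : ∑ t ∈ Finset.powersetCard m (Finset.Icc 1 (a - 1)),
          ∏ i ∈ insert 0 t, (i : ℚ) = 0 :=
        Finset.sum_eq_zero fun t _ =>
          Finset.prod_eq_zero (Finset.mem_insert_self 0 t) (by simp)
      rw [hz, add_zero]

lemma stirS1_esym {a r : ℕ} (hr : 1 ≤ r) (hra : r ≤ a) :
    (stirS1 a r : ℚ) = (-1 : ℚ) ^ (a - r) * esymQ (a - r) (a - 1) := by
  have hcard : Multiset.card (Multiset.map (Nat.cast : ℕ → ℤ) (Finset.range a).val) = a := by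
    simp
  have h1 : stirS1 a r = (-1 : ℤ) ^ (a - r) *
      ∑ t ∈ Finset.powersetCard (a - r) (Finset.range a), ∏ i ∈ t, (i : ℤ) := by
    unfold stirS1
    have hs : (∏ i ∈ Finset.range a, (Polynomial.X - Polynomial.C (i : ℤ)))
        = ((Multiset.map (Nat.cast : ℕ → ℤ) (Finset.range a).val).map
            (fun t => Polynomial.X - Polynomial.C t)).prod := by
      rw [Multiset.map_map]
      rfl
    rw [hs, Multiset.prod_X_sub_C_coeff _ (by rw [hcard]; exact hra), hcard,
      Finset.esymm_map_val]
  rw [h1]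
  push_cast
  rw [sum_powersetCard_range a (a - r) (le_trans hr hra)]

/-! ### Main theorem -/

/-- For `n, r ≥ 1` and `k ≥ 2`:
`t(n,k,r) = ∑_{a ≥ r} (-1)^{a-r} e_{a-r}(1,…,a-1)
              ∑_{λ ⊢ n, l(λ) = a} f_λ ∏_j t(λ_j, k-1, 1)`.
Terms with `a > n` vanish (there is no partition of `n` of length `> n`),
so the sum over `a ≥ r` is the sum over `r ≤ a ≤ n`. -/
theorem t_recurrence_esymm (n r k : ℕ) (hn : 1 ≤ n) (hr : 1 ≤ r) (hk : 2 ≤ k) :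
    (tnum n k r : ℚ) =
      ∑ a ∈ Finset.Icc r n,
        (-1 : ℚ) ^ (a - r) * esymQ (a - r) (a - 1) *
          ∑ P ∈ Finset.univ.filter (fun P : Nat.Partition n => Multiset.card P.parts = a),
            fPart n P * (P.parts.map fun i => (tnum i (k - 1) 1 : ℚ)).prod := by
  obtain ⟨j, rfl⟩ : ∃ j, k = j + 1 := ⟨k - 1, by omega⟩
  have hj : 1 ≤ j := by omega
  simp only [Nat.add_sub_cancel]
  rw [tnum_peel j n r]
  push_cast
  refine Finset.sum_congr rfl fun a ha => ?_
  rw [Finset.mem_Icc] at ha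
  have hrep := rep_tnum j hj n a (le_trans hr ha.1)
  have hpar := partition_rep (fun i => (tnum i j 1 : ℚ))
    (show ((tnum 0 j 1 : ℤ) : ℚ) = 0 by
      rw [show tnum 0 j 1 = 0 from tnum_of_lt hj (by omega)]; simp) a n
  rw [← GkQ_def] at hpar
  have hfa : ((a.factorial : ℚ)) ≠ 0 := by positivity
  have h1 := mul_right_cancel₀ hfa (hpar.trans hrep.symm)
  rw [← h1, stirS1_esym hr ha.1]
  ring
end

section
/- For all n ≥ 1, r ≥ 1 and k ≥ 2, T(n,k,r) = ∑_{λ ⊢ n, l(λ)=r} f_λ ∏_{i=1}^{r} ( ∑_{r'=1}^{λ_i} T(λ_i, k-1, r') ), where the sum is over integer partitions λ of n of length r. -/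
open Finset

section Aux
open scoped Classical
variable {α β : Type*}

noncomputable instance setoidFintype [Fintype α] : Fintype (Setoid α) :=
  Fintype.ofInjective (fun s : Setoid α => s.r) fun _ _ h => Setoid.ext fun x y =>
    iff_of_eq (congrFun (congrFun h x) y)

noncomputable instance quotFintype [Fintype α] (p : Setoid α) : Fintype (Quotient p) :=
  Fintype.ofFinite _

lemma card_quot_le [Fintype α] (p : Setoid α) : Nat.card (Quotient p) ≤ Fintype.card α := by
  rw [← Nat.card_eq_fintype_card]
  exact Nat.card_le_card_of_surjective (Quotient.mk p) Quotient.mk_surjective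


noncomputable def cSize [Fintype α] (p : Setoid α) (c : Quotient p) : ℕ :=
  Nat.card {x // Quotient.mk p x = c}

noncomputable def ptype [Fintype α] (p : Setoid α) : Multiset ℕ :=
  (univ.val : Multiset (Quotient p)).map (cSize p)

lemma cSize_pos [Fintype α] (p : Setoid α) (c : Quotient p) : 0 < cSize p c := by
  obtain ⟨x, rfl⟩ := Quotient.exists_rep c
  have : Nonempty {y // Quotient.mk p y = ⟦x⟧} := ⟨⟨x, rfl⟩⟩
  exact Nat.card_pos

lemma sum_cSize [Fintype α] (p : Setoid α) : ∑ c : Quotient p, cSize p c = Fintype.card α := by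
  classical
  simp only [cSize, Nat.card_eq_fintype_card, Fintype.card_subtype]
  exact (Finset.card_eq_sum_card_fiberwise (f := Quotient.mk p) (fun x _ => mem_univ _)).symm

lemma ptype_sum [Fintype α] (p : Setoid α) : (ptype p).sum = Fintype.card α := by
  rw [ptype, ← sum_cSize p]; rfl

lemma ptype_card [Fintype α] (p : Setoid α) :
    Multiset.card (ptype p) = Nat.card (Quotient p) := by
  rw [ptype, Multiset.card_map, Nat.card_eq_fintype_card]; rfl

lemma zero_not_mem_ptype [Fintype α] (p : Setoid α) : 0 ∉ ptype p := by
  simp only [ptype, Multiset.mem_map]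
  rintro ⟨c, -, hc⟩
  exact absurd hc.symm (cSize_pos p c).ne

def setoidCongr (e : α ≃ β) : Setoid α ≃ Setoid β where
  toFun p := Setoid.comap e.symm p
  invFun q := Setoid.comap e q
  left_inv p := Setoid.ext fun x y => by simp [Setoid.comap_rel]
  right_inv q := Setoid.ext fun x y => by simp [Setoid.comap_rel]

lemma setoidCongr_rel (e : α ≃ β) (p : Setoid α) (x y : β) :
    (setoidCongr e p) x y ↔ p (e.symm x) (e.symm y) := Iff.rfl

def quotCongr (e : α ≃ β) (p : Setoid α) : Quotient p ≃ Quotient (setoidCongr e p) :=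
  Quotient.congr e (fun a b => by
    rw [setoidCongr_rel, e.symm_apply_apply, e.symm_apply_apply])

lemma quotCongr_mk (e : α ≃ β) (p : Setoid α) (x : α) :
    quotCongr e p (Quotient.mk p x) = Quotient.mk _ (e x) := rfl

lemma cSize_congr [Fintype α] [Fintype β] (e : α ≃ β) (p : Setoid α) (c : Quotient p) :
    cSize (setoidCongr e p) (quotCongr e p c) = cSize p c := by
  obtain ⟨a, rfl⟩ := Quotient.exists_rep c
  apply Nat.card_congr
  refine (Equiv.subtypeEquiv e.symm fun y => ?_).trans (Equiv.refl _)
  rw [quotCongr_mk]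
  constructor
  · intro h
    have h2 : (setoidCongr e p) y (e a) := Quotient.exact h
    rw [setoidCongr_rel] at h2
    simpa using Quotient.sound h2
  · intro h
    have h2 : p (e.symm y) a := Quotient.exact h
    refine Quotient.sound (?_ : (setoidCongr e p) y (e a))
    rw [setoidCongr_rel]
    simpa using h2

lemma ptype_congr [Fintype α] [Fintype β] (e : α ≃ β) (p : Setoid α) :
    ptype (setoidCongr e p) = ptype p := by
  unfold ptype
  have h1 : (univ : Finset (Quotient (setoidCongr e p))).val
      = ((univ : Finset (Quotient p)).map (quotCongr e p).toEmbedding).val := by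
    rw [Finset.univ_map_equiv_to_embedding]
  rw [h1, Finset.map_val, Multiset.map_map]
  apply Multiset.map_congr rfl
  intro c _
  exact cSize_congr e p c

lemma cardQuot_congr [Fintype α] [Fintype β] (e : α ≃ β) (p : Setoid α) :
    Nat.card (Quotient (setoidCongr e p)) = Nat.card (Quotient p) :=
  Nat.card_congr (quotCongr e p).symm

lemma card_filter_setoid_congr [Fintype α] [Fintype β] (e : α ≃ β) (Pr : Multiset ℕ → Prop)
    (Cr : ℕ → Prop) :
    (univ.filter fun p : Setoid α => Pr (ptype p) ∧ Cr (Nat.card (Quotient p))).card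
      = (univ.filter fun q : Setoid β => Pr (ptype q) ∧ Cr (Nat.card (Quotient q))).card := by
  apply Finset.card_bij (fun p _ => setoidCongr e p)
  · intro p hp
    simp only [mem_filter, mem_univ, true_and] at hp ⊢
    rwa [ptype_congr, cardQuot_congr]
  · intro p _ q _ h
    exact (setoidCongr e).injective (by exact h)
  · intro q hq
    refine ⟨setoidCongr e.symm q, ?_, ?_⟩
    · simp only [mem_filter, mem_univ, true_and] at hq ⊢
      rwa [ptype_congr, cardQuot_congr]
    · show setoidCongr e (setoidCongr e.symm q) = q
      symm
      ext x y
      simp [setoidCongr_rel]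

lemma stirS2_eq_card (α : Type*) [Fintype α] (r : ℕ) :
    stirS2 (Fintype.card α) r
      = (univ.filter fun p : Setoid α => Nat.card (Quotient p) = r).card := by
  rw [stirS2, Nat.card_eq_fintype_card, Fintype.card_subtype]
  have := card_filter_setoid_congr ((Fintype.equivFin α).symm) (fun _ => True) (fun m => m = r)
  simp only [true_and] at this
  exact this

lemma stirS2_eq_zero {n r : ℕ} (h : n < r) : stirS2 n r = 0 := by
  rw [stirS2, Nat.card_eq_zero]
  left
  constructor
  rintro ⟨p, hp⟩
  have := card_quot_le p
  rw [hp, Fintype.card_fin] at this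
  omega

lemma Tnum_succ (n k r : ℕ) : Tnum n (k+1) r = ∑ m ∈ Icc r n, stirS2 n m * Tnum m k r := rfl

lemma Tnum_rev (k n r : ℕ) : Tnum n (k+1) r = ∑ m ∈ Icc r n, Tnum n k m * stirS2 m r := by
  induction k generalizing n r with
  | zero =>
    show Tnum n 1 r = _
    rw [Tnum_succ]
    have h1 : ∀ m ∈ Icc r n, stirS2 n m * Tnum m 0 r = if m = r then stirS2 n r else 0 := by
      intro m _
      show stirS2 n m * (if m = r then 1 else 0) = _
      split <;> simp_all
    have h2 : ∀ m ∈ Icc r n, Tnum n 0 m * stirS2 m r = if m = n then stirS2 n r else 0 := by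
      intro m _
      show (if n = m then 1 else 0) * stirS2 m r = _
      rcases eq_or_ne m n with rfl | hne <;> simp_all [eq_comm]
    rw [Finset.sum_congr rfl h1, Finset.sum_congr rfl h2, Finset.sum_ite_eq' (Icc r n) r,
      Finset.sum_ite_eq' (Icc r n) n]
    rcases le_or_gt r n with h | h
    · simp [h]
    · simp [h.not_ge, stirS2_eq_zero h]
  | succ k ih =>
    rw [Tnum_succ]
    have : ∀ m ∈ Icc r n, stirS2 n m * Tnum m (k+1) r
        = ∑ m' ∈ Icc r m, stirS2 n m * (Tnum m k m' * stirS2 m' r) := by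
      intro m _
      rw [ih, Finset.mul_sum]
    rw [Finset.sum_congr rfl this]
    rw [Finset.sum_comm' (s' := fun m' => Icc m' n) (t' := Icc r n) (by intro m m'; simp; omega)]
    apply Finset.sum_congr rfl
    intro m' _
    rw [Tnum_succ, Finset.sum_mul]
    apply Finset.sum_congr rfl
    intro m _
    ring

end Aux

section Decomp
open scoped Classical
variable {α : Type*} [Fintype α]

/-- restriction of a setoid to a class of `P` -/
def restr (P Q : Setoid α) (c : Quotient P) : Setoid {x // Quotient.mk P x = c} :=
  Setoid.comap Subtype.val Q

lemma restr_rel (P Q : Setoid α) (c : Quotient P) (y₁ y₂ : {x // Quotient.mk P x = c}) :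
    (restr P Q c) y₁ y₂ ↔ Q y₁.val y₂.val := Iff.rfl

/-- projection between quotients for comparable setoids -/
def proj {Q P : Setoid α} (h : Q ≤ P) : Quotient Q → Quotient P :=
  Quotient.lift (Quotient.mk P) fun _ _ hab => Quotient.sound (h hab)

lemma proj_mk {Q P : Setoid α} (h : Q ≤ P) (x : α) :
    proj h (Quotient.mk Q x) = Quotient.mk P x := rfl

/-- embedding of the quotient of a restriction -/
def emb (P Q : Setoid α) (c : Quotient P) : Quotient (restr P Q c) → Quotient Q :=
  Quotient.lift (fun y => Quotient.mk Q y.val) fun _ _ hab => Quotient.sound hab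

lemma emb_mk (P Q : Setoid α) (c : Quotient P) (y : {x // Quotient.mk P x = c}) :
    emb P Q c (Quotient.mk _ y) = Quotient.mk Q y.val := rfl

lemma proj_emb {P Q : Setoid α} (h : Q ≤ P) (c : Quotient P) (d : Quotient (restr P Q c)) :
    proj h (emb P Q c d) = c := by
  obtain ⟨y, rfl⟩ := Quotient.exists_rep d
  rw [emb_mk, proj_mk]
  exact y.2

lemma emb_inj (P Q : Setoid α) (c : Quotient P) : Function.Injective (emb P Q c) := by
  intro d d' h
  obtain ⟨y, rfl⟩ := Quotient.exists_rep d
  obtain ⟨y', rfl⟩ := Quotient.exists_rep d'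
  rw [emb_mk, emb_mk] at h
  have hq : Q y.val y'.val := Quotient.exact h
  exact Quotient.sound hq

lemma cSize_emb {P Q : Setoid α} (h : Q ≤ P) (c : Quotient P) (d : Quotient (restr P Q c)) :
    cSize Q (emb P Q c d) = cSize (restr P Q c) d := by
  classical
  obtain ⟨y₀, rfl⟩ := Quotient.exists_rep d
  rw [emb_mk]
  apply Nat.card_congr
  refine ⟨fun x => ⟨⟨x.val, ?_⟩, ?_⟩, fun y => ⟨y.val.val, ?_⟩, fun x => Subtype.ext rfl,
    fun y => Subtype.ext (Subtype.ext rfl)⟩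
  · have hq : Q x.val y₀.val := Quotient.exact x.2
    exact (Quotient.sound (h hq)).trans y₀.2
  · have hq : Q x.val y₀.val := Quotient.exact x.2
    exact Quotient.sound hq
  · have hq := Quotient.exact y.2
    exact Quotient.sound hq

lemma prod_classes {Q P : Setoid α} (h : Q ≤ P) (g : ℕ → ℕ) :
    ∏ d : Quotient Q, g (cSize Q d)
      = ∏ c : Quotient P, ∏ d : Quotient (restr P Q c), g (cSize (restr P Q c) d) := by
  classical
  rw [← Finset.prod_fiberwise_of_maps_to (g := proj h) (t := univ)
    (fun d _ => mem_univ (proj h d)) (fun d => g (cSize Q d))]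
  apply Finset.prod_congr rfl
  intro c _
  symm
  apply Finset.prod_bij (i := fun d _ => emb P Q c d)
  · intro d _
    simp only [mem_filter, mem_univ, true_and]
    exact proj_emb h c d
  · intro d _ d' _ hdd'
    exact emb_inj P Q c hdd'
  · intro d hd
    simp only [mem_filter, mem_univ, true_and] at hd
    obtain ⟨x, rfl⟩ := Quotient.exists_rep d
    exact ⟨Quotient.mk _ ⟨x, hd⟩, mem_univ _, rfl⟩
  · intro d _
    rw [cSize_emb h]

/-- gluing a family of setoids on the classes of `P` -/
def glue (P : Setoid α) (f : ∀ c : Quotient P, Setoid {x // Quotient.mk P x = c}) : Setoid α :=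
  Setoid.ker fun x =>
    (⟨Quotient.mk P x, Quotient.mk (f (Quotient.mk P x)) ⟨x, rfl⟩⟩ : Σ c : Quotient P, Quotient (f c))

lemma glue_key (P : Setoid α) (f : ∀ c : Quotient P, Setoid {x // Quotient.mk P x = c})
    (x : α) (c : Quotient P) (h : Quotient.mk P x = c) :
    (⟨Quotient.mk P x, Quotient.mk (f (Quotient.mk P x)) ⟨x, rfl⟩⟩ : Σ c : Quotient P, Quotient (f c))
      = ⟨c, Quotient.mk (f c) ⟨x, h⟩⟩ := by subst h; rfl

lemma glue_rel_iff (P : Setoid α) (f : ∀ c : Quotient P, Setoid {x // Quotient.mk P x = c})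
    (x y : α) :
    (glue P f) x y
      ↔ ∃ h : Quotient.mk P x = Quotient.mk P y, (f (Quotient.mk P y)) ⟨x, h⟩ ⟨y, rfl⟩ := by
  show _ = _ ↔ _
  constructor
  · intro h
    have h1 : Quotient.mk P x = Quotient.mk P y := congrArg Sigma.fst h
    refine ⟨h1, ?_⟩
    have h2 := (glue_key P f x _ h1).symm.trans (h.trans (glue_key P f y _ rfl))
    rw [Sigma.mk.inj_iff] at h2
    exact Quotient.exact (eq_of_heq h2.2)
  · rintro ⟨h1, hrel⟩
    calc (⟨Quotient.mk P x, Quotient.mk (f (Quotient.mk P x)) ⟨x, rfl⟩⟩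
            : Σ c : Quotient P, Quotient (f c))
        = ⟨Quotient.mk P y, Quotient.mk (f (Quotient.mk P y)) ⟨x, h1⟩⟩ := glue_key P f x _ h1
      _ = ⟨Quotient.mk P y, Quotient.mk (f (Quotient.mk P y)) ⟨y, rfl⟩⟩ := by
          rw [Quotient.sound hrel]

lemma glue_le (P : Setoid α) (f : ∀ c : Quotient P, Setoid {x // Quotient.mk P x = c}) :
    glue P f ≤ P := by
  intro x y h
  rw [glue_rel_iff] at h
  exact Quotient.exact h.1

lemma restr_glue (P : Setoid α) (f : ∀ c : Quotient P, Setoid {x // Quotient.mk P x = c})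
    (c : Quotient P) : restr P (glue P f) c = f c := by
  apply Setoid.ext
  rintro ⟨a, ha⟩ ⟨b, hb⟩
  subst hb
  rw [restr_rel, glue_rel_iff]
  exact ⟨fun ⟨_, hq⟩ => hq, fun hq => ⟨ha, hq⟩⟩

lemma eq_of_restr_eq {P Q Q' : Setoid α} (hQ : Q ≤ P) (hQ' : Q' ≤ P)
    (h : ∀ c, restr P Q c = restr P Q' c) : Q = Q' := by
  have main : ∀ (A B : Setoid α), A ≤ P → (∀ c, restr P A c = restr P B c) →
      ∀ x y, A x y → B x y := by
    intro A B hA hr x y hxy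
    have hp : Quotient.mk P x = Quotient.mk P y := Quotient.sound (hA hxy)
    have h2 : (restr P A (Quotient.mk P y)) ⟨x, hp⟩ ⟨y, rfl⟩ := hxy
    rw [hr] at h2
    exact h2
  exact Setoid.ext fun x y =>
    ⟨main Q Q' hQ h x y, main Q' Q hQ' (fun c => (h c).symm) x y⟩

lemma sum_le_eq_prod (P : Setoid α) (g : ℕ → ℕ) :
    ∑ Q ∈ univ.filter (fun Q : Setoid α => Q ≤ P), ∏ d : Quotient Q, g (cSize Q d)
      = ∏ c : Quotient P,
          ∑ q : Setoid {x // Quotient.mk P x = c}, ∏ d : Quotient q, g (cSize q d) := by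
  classical
  rw [Finset.prod_univ_sum]
  rw [Fintype.piFinset_univ]
  apply Finset.sum_bij (i := fun Q _ => fun c => restr P Q c)
  · intro Q _; exact mem_univ _
  · intro Q hQ Q' hQ' h
    simp only [mem_filter, mem_univ, true_and] at hQ hQ'
    exact eq_of_restr_eq hQ hQ' (fun c => congrFun h c)
  · intro f _
    refine ⟨glue P f, ?_, ?_⟩
    · simp only [mem_filter, mem_univ, true_and]
      exact glue_le P f
    · funext c
      exact restr_glue P f c
  · intro Q hQ
    simp only [mem_filter, mem_univ, true_and] at hQ
    exact prod_classes hQ g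

end Decomp

section LemA
open scoped Classical

/-- inner sum `B_K(m) = ∑_{r'=1}^m T(m,K,r')` -/
noncomputable def BB (K m : ℕ) : ℕ := ∑ r' ∈ Icc 1 m, Tnum m K r'

lemma BB_zero {m : ℕ} (hm : 1 ≤ m) : BB 0 m = 1 := by
  rw [BB]
  have h1 : ∀ r' ∈ Icc 1 m, Tnum m 0 r' = if r' = m then 1 else 0 := by
    intro r' _
    show (if m = r' then 1 else 0) = _
    simp [eq_comm]
  rw [Finset.sum_congr rfl h1, Finset.sum_ite_eq' _ m]
  simp [hm]

variable {α : Type*} [Fintype α]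

/-- `p ≤ s` induces a setoid on the quotient by `p` -/
def pushQuot {p s : Setoid α} (h : p ≤ s) : Setoid (Quotient p) := Setoid.ker (proj h)

lemma le_comap (p : Setoid α) (q : Setoid (Quotient p)) :
    p ≤ Setoid.comap (Quotient.mk p) q := by
  intro x y hxy
  have hq : Quotient.mk p x = Quotient.mk p y := Quotient.sound hxy
  show q (Quotient.mk p x) (Quotient.mk p y)
  rw [hq]

lemma comap_pushQuot {p s : Setoid α} (h : p ≤ s) :
    Setoid.comap (Quotient.mk p) (pushQuot h) = s := by
  ext x y
  show proj h (Quotient.mk p x) = proj h (Quotient.mk p y) ↔ _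
  rw [proj_mk, proj_mk]
  exact ⟨fun hh => Quotient.exact hh, fun hh => Quotient.sound hh⟩

lemma pushQuot_comap (p : Setoid α) (q : Setoid (Quotient p))
    (h : p ≤ Setoid.comap (Quotient.mk p) q) :
    pushQuot h = q := by
  ext c c'
  obtain ⟨x, rfl⟩ := Quotient.exists_rep c
  obtain ⟨y, rfl⟩ := Quotient.exists_rep c'
  show proj h (Quotient.mk p x) = proj h (Quotient.mk p y) ↔ _
  rw [proj_mk, proj_mk]
  constructor
  · intro hh
    have h2 := Quotient.exact hh
    exact h2
  · intro hh
    exact Quotient.sound hh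

noncomputable def pushQuotEquiv {p s : Setoid α} (h : p ≤ s) :
    Quotient (pushQuot h) ≃ Quotient s :=
  Setoid.quotientKerEquivOfSurjective (proj h) (by
    intro d
    obtain ⟨x, rfl⟩ := Quotient.exists_rep d
    exact ⟨Quotient.mk p x, rfl⟩)

noncomputable def comapQuotEquiv (p : Setoid α) (q : Setoid (Quotient p)) :
    Quotient (Setoid.comap (Quotient.mk p) q) ≃ Quotient q :=
  Equiv.ofBijective (Quotient.lift (fun x => Quotient.mk q (Quotient.mk p x))
      (fun _ _ hab => Quotient.sound hab)) (by
    constructor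
    · intro d d'
      obtain ⟨x, rfl⟩ := Quotient.exists_rep d
      obtain ⟨y, rfl⟩ := Quotient.exists_rep d'
      intro hh
      refine Quotient.sound ?_
      show q (Quotient.mk p x) (Quotient.mk p y)
      exact Quotient.exact hh
    · intro d
      obtain ⟨c, rfl⟩ := Quotient.exists_rep d
      obtain ⟨x, rfl⟩ := Quotient.exists_rep c
      exact ⟨Quotient.mk _ x, rfl⟩)

lemma pair_swap [Fintype α] (F : Setoid α → ℕ) (r : ℕ) :
    ∑ p : Setoid α,
        ∑ _q ∈ univ.filter (fun q : Setoid (Quotient p) => Nat.card (Quotient q) = r), F p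
      = ∑ s ∈ univ.filter (fun s : Setoid α => Nat.card (Quotient s) = r),
          ∑ p ∈ univ.filter (fun p : Setoid α => p ≤ s), F p := by
  rw [Finset.sum_sigma' univ _ (fun p _q => F p), Finset.sum_sigma']
  refine Finset.sum_bij'
    (i := fun (x : Σ p : Setoid α, Setoid (Quotient p)) _ =>
      (⟨Setoid.comap (Quotient.mk x.1) x.2, x.1⟩ : Σ _s : Setoid α, Setoid α))
    (j := fun (y : Σ _s : Setoid α, Setoid α) hy =>
      ⟨y.2, pushQuot (by
        simp only [Finset.mem_sigma, mem_filter, mem_univ, true_and] at hy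
        exact hy.2)⟩)
    ?hi ?hj ?li ?ri ?val
  case hi =>
    intro x hx
    simp only [Finset.mem_sigma, mem_filter, mem_univ, true_and] at hx ⊢
    constructor
    · rw [Nat.card_congr (comapQuotEquiv x.1 x.2)]
      exact hx
    · exact le_comap x.1 x.2
  case hj =>
    intro y hy
    simp only [Finset.mem_sigma, mem_filter, mem_univ, true_and] at hy ⊢
    rw [Nat.card_congr (pushQuotEquiv _)]
    exact hy.1
  case li =>
    intro x hx
    exact Sigma.ext rfl (heq_of_eq (pushQuot_comap x.1 x.2 _))
  case ri =>
    intro y hy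
    simp only [Finset.mem_sigma, mem_filter, mem_univ, true_and] at hy
    exact Sigma.ext (comap_pushQuot hy.2) HEq.rfl
  case val =>
    intro x _
    rfl

lemma lemA : ∀ (K : ℕ) (α : Type) [Fintype α] (r : ℕ),
    Tnum (Fintype.card α) (K + 1) r
      = ∑ p ∈ univ.filter (fun p : Setoid α => Nat.card (Quotient p) = r),
          ∏ c : Quotient p, BB K (cSize p c) := by
  intro K
  induction K with
  | zero =>
    intro α _ r
    have hL : Tnum (Fintype.card α) 1 r = stirS2 (Fintype.card α) r := by
      rw [Tnum_succ]
      have h1 : ∀ m ∈ Icc r (Fintype.card α),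
          stirS2 (Fintype.card α) m * Tnum m 0 r
            = if m = r then stirS2 (Fintype.card α) r else 0 := by
        intro m _
        show stirS2 (Fintype.card α) m * (if m = r then 1 else 0) = _
        split <;> simp_all
      rw [Finset.sum_congr rfl h1, Finset.sum_ite_eq' _ r]
      rcases le_or_gt r (Fintype.card α) with h | h
      · simp [h]
      · simp [h.not_ge, stirS2_eq_zero h]
    rw [hL, stirS2_eq_card, Finset.card_eq_sum_ones]
    apply Finset.sum_congr rfl
    intro p _
    exact (Finset.prod_eq_one fun c _ => BB_zero (cSize_pos p c)).symm
  | succ K ih =>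
    intro α _ r
    rw [Tnum_rev]
    have hsub : Icc r (Fintype.card α) ⊆ range (Fintype.card α + 1) := by
      intro m hm
      simp only [mem_Icc] at hm
      simp only [mem_range]
      omega
    rw [Finset.sum_subset hsub (by
      intro m hm hnot
      simp only [mem_range] at hm
      simp only [mem_Icc] at hnot
      have : m < r := by omega
      rw [stirS2_eq_zero this, mul_zero])]
    have grp : ∑ m ∈ range (Fintype.card α + 1), Tnum (Fintype.card α) (K+1) m * stirS2 m r
        = ∑ p : Setoid α,
            (∏ c : Quotient p, BB K (cSize p c)) * stirS2 (Nat.card (Quotient p)) r := by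
      rw [← Finset.sum_fiberwise_of_maps_to
        (g := fun p : Setoid α => Nat.card (Quotient p)) (t := range (Fintype.card α + 1))
        (fun p _ => by
          simp only [mem_range, Nat.lt_succ_iff]
          exact card_quot_le p)
        (fun p => (∏ c : Quotient p, BB K (cSize p c)) * stirS2 (Nat.card (Quotient p)) r)]
      apply Finset.sum_congr rfl
      intro m _
      rw [ih α m, Finset.sum_mul]
      apply Finset.sum_congr rfl
      intro p hp
      simp only [mem_filter, mem_univ, true_and] at hp
      rw [hp]
    rw [grp]
    have step2 : ∀ p : Setoid α,
        (∏ c : Quotient p, BB K (cSize p c)) * stirS2 (Nat.card (Quotient p)) r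
          = ∑ _q ∈ univ.filter (fun q : Setoid (Quotient p) => Nat.card (Quotient q) = r),
              (∏ c : Quotient p, BB K (cSize p c)) := by
      intro p
      rw [Finset.sum_const, Nat.card_eq_fintype_card, stirS2_eq_card (Quotient p) r,
        smul_eq_mul, mul_comm]
    rw [Finset.sum_congr rfl (fun p _ => step2 p), pair_swap]
    apply Finset.sum_congr rfl
    intro s hs
    rw [sum_le_eq_prod s (BB K)]
    apply Finset.prod_congr rfl
    intro c _
    -- BB (K+1) (cSize s c) = ∑ q : Setoid cls, ∏ d, BB K (cSize q d)
    have hcs : cSize s c = Fintype.card {x // Quotient.mk s x = c} :=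
      Nat.card_eq_fintype_card
    rw [BB, hcs]
    have h2 : ∀ r' ∈ Icc 1 (Fintype.card {x // Quotient.mk s x = c}),
        Tnum (Fintype.card {x // Quotient.mk s x = c}) (K + 1) r'
          = ∑ q ∈ univ.filter
              (fun q : Setoid {x // Quotient.mk s x = c} => Nat.card (Quotient q) = r'),
              ∏ d : Quotient q, BB K (cSize q d) :=
      fun r' _ => ih _ r'
    rw [Finset.sum_congr rfl h2]
    rw [Finset.sum_fiberwise_of_maps_to
      (g := fun q : Setoid {x // Quotient.mk s x = c} => Nat.card (Quotient q))
      (t := Icc 1 (Fintype.card {x // Quotient.mk s x = c}))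
      (fun q _ => by
        obtain ⟨x, hx⟩ := Quotient.exists_rep c
        have hne : Nonempty (Quotient q) := ⟨Quotient.mk q ⟨x, hx⟩⟩
        have h1 : 0 < Nat.card (Quotient q) := Nat.card_pos
        simp only [mem_Icc]
        exact ⟨h1, card_quot_le q⟩)
      (fun q => ∏ d : Quotient q, BB K (cSize q d))]

end LemA

section Count
open scoped Classical
variable {α : Type*} [Fintype α]

/-- the class of `a` as a finset -/
noncomputable def classOf (p : Setoid α) (a : α) : Finset α := univ.filter fun x => p a x

lemma mem_classOf (p : Setoid α) (a x : α) : x ∈ classOf p a ↔ p a x := by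
  simp [classOf]

lemma card_classOf (p : Setoid α) (a : α) :
    (classOf p a).card = cSize p (Quotient.mk p a) := by
  rw [cSize, Nat.card_eq_fintype_card, Fintype.card_subtype]
  congr 1
  apply Finset.filter_congr
  intro x _
  constructor
  · intro h
    exact Quotient.sound (p.symm h)
  · intro h
    exact p.symm (Quotient.exact h)

lemma cSize_mem_ptype (p : Setoid α) (c : Quotient p) : cSize p c ∈ ptype p :=
  Multiset.mem_map_of_mem _ (Finset.mem_val.mpr (mem_univ c))

/-- restriction of a setoid to the complement of a finset -/
def restrC (S : Finset α) (p : Setoid α) : Setoid {x : α // x ∉ S} :=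
  Setoid.comap Subtype.val p

/-- embedding of the quotient of the restriction -/
def embC (S : Finset α) (p : Setoid α) : Quotient (restrC S p) → Quotient p :=
  Quotient.lift (fun y => Quotient.mk p y.val) (fun _ _ h => Quotient.sound h)

lemma embC_mk (S : Finset α) (p : Setoid α) (y : {x : α // x ∉ S}) :
    embC S p (Quotient.mk _ y) = Quotient.mk p y.val := rfl

lemma embC_inj (S : Finset α) (p : Setoid α) : Function.Injective (embC S p) := by
  intro d d' h
  obtain ⟨y, rfl⟩ := Quotient.exists_rep d
  obtain ⟨y', rfl⟩ := Quotient.exists_rep d'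
  rw [embC_mk, embC_mk] at h
  have hq : p y.val y'.val := Quotient.exact h
  exact Quotient.sound hq

variable {a : α} {S : Finset α} {p : Setoid α}

lemma cSize_embC (hS : ∀ x, p a x ↔ x ∈ S) (d : Quotient (restrC S p)) :
    cSize p (embC S p d) = cSize (restrC S p) d := by
  obtain ⟨y₀, rfl⟩ := Quotient.exists_rep d
  rw [embC_mk]
  apply Nat.card_congr
  refine ⟨fun x => ⟨⟨x.val, ?_⟩, ?_⟩, fun y => ⟨y.val.val, ?_⟩, fun x => Subtype.ext rfl,
    fun y => Subtype.ext (Subtype.ext rfl)⟩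
  · have hq : p x.val y₀.val := Quotient.exact x.2
    intro hmem
    exact y₀.2 ((hS y₀.val).1 (p.trans ((hS x.val).2 hmem) hq))
  · have hq : p x.val y₀.val := Quotient.exact x.2
    exact Quotient.sound hq
  · have hq := Quotient.exact y.2
    exact Quotient.sound hq

lemma range_embC (hS : ∀ x, p a x ↔ x ∈ S) (ha : a ∈ S) :
    (univ : Finset (Quotient p)).erase (Quotient.mk p a)
      = univ.image (embC S p) := by
  ext d
  simp only [mem_erase, mem_univ, and_true, Finset.mem_image, true_and]
  obtain ⟨x, rfl⟩ := Quotient.exists_rep d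
  constructor
  · intro hne
    have hx : x ∉ S := by
      intro hmem
      apply hne
      exact Quotient.sound (p.symm ((hS x).2 hmem))
    exact ⟨Quotient.mk _ ⟨x, hx⟩, rfl⟩
  · rintro ⟨d', hd'⟩
    obtain ⟨y, rfl⟩ := Quotient.exists_rep d'
    rw [embC_mk] at hd'
    intro heq
    rw [← hd'] at heq
    have hq : p y.val a := Quotient.exact heq
    exact y.2 ((hS y.val).1 (p.symm hq))

lemma ptype_decomp (hS : ∀ x, p a x ↔ x ∈ S) (ha : a ∈ S) :
    ptype p = S.card ::ₘ ptype (restrC S p) := by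
  rw [ptype, ← Multiset.cons_erase
    (show Quotient.mk p a ∈ (univ : Finset (Quotient p)).val from
      Finset.mem_val.mpr (mem_univ _)), Multiset.map_cons]
  congr 1
  · rw [← card_classOf]
    congr 1
    ext x
    rw [mem_classOf]
    exact hS x
  · have h2 : (univ : Finset (Quotient p)).val.erase (Quotient.mk p a)
        = ((univ : Finset (Quotient p)).erase (Quotient.mk p a)).val :=
      (Finset.erase_val _ _).symm
    rw [h2, range_embC hS ha]
    have himg : (univ.image (embC S p)).val = (univ.val : Multiset _).map (embC S p) := by
      rw [Finset.image_val, Multiset.dedup_eq_self.mpr]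
      apply Multiset.Nodup.map (embC_inj S p)
      exact univ.nodup
    rw [himg, Multiset.map_map, ptype]
    apply Multiset.map_congr rfl
    intro d _
    exact cSize_embC hS d

/-- gluing a setoid on the complement of `S` with the full relation on `S` -/
noncomputable def glueC (S : Finset α) (q : Setoid {x : α // x ∉ S}) : Setoid α :=
  Setoid.ker (fun x => if hx : x ∈ S then none else some (Quotient.mk q ⟨x, hx⟩))

lemma glueC_rel (S : Finset α) (q : Setoid {x : α // x ∉ S}) (x y : α) :
    (glueC S q) x y
      ↔ (if hx : x ∈ S then none else some (Quotient.mk q ⟨x, hx⟩))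
          = (if hy : y ∈ S then none else some (Quotient.mk q ⟨y, hy⟩)) := Iff.rfl

lemma glueC_rel_a (ha : a ∈ S) (q : Setoid {x : α // x ∉ S}) (x : α) :
    (glueC S q) a x ↔ x ∈ S := by
  rw [glueC_rel, dif_pos ha]
  constructor
  · intro h
    by_contra hx
    rw [dif_neg hx] at h
    exact Option.some_ne_none _ h.symm
  · intro hx
    rw [dif_pos hx]

lemma restrC_glueC (S : Finset α) (q : Setoid {x : α // x ∉ S}) :
    restrC S (glueC S q) = q := by
  apply Setoid.ext
  intro y y'
  show (glueC S q) y.val y'.val ↔ q y y'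
  rw [glueC_rel, dif_neg y.2, dif_neg y'.2, Option.some_inj]
  constructor
  · intro h
    have h2 : q ⟨y.val, y.2⟩ ⟨y'.val, y'.2⟩ := Quotient.exact h
    exact h2
  · intro h
    exact Quotient.sound h

lemma glueC_restrC (hS : ∀ x, p a x ↔ x ∈ S) :
    glueC S (restrC S p) = p := by
  apply Setoid.ext
  intro x y
  rw [glueC_rel]
  by_cases hx : x ∈ S <;> by_cases hy : y ∈ S
  · rw [dif_pos hx, dif_pos hy]
    exact iff_of_true rfl (p.trans (p.symm ((hS x).2 hx)) ((hS y).2 hy))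
  · rw [dif_pos hx, dif_neg hy]
    exact iff_of_false (fun h => Option.some_ne_none _ h.symm)
      (fun h => hy ((hS y).1 (p.trans ((hS x).2 hx) h)))
  · rw [dif_neg hx, dif_pos hy]
    exact iff_of_false (fun h => Option.some_ne_none _ h)
      (fun h => hx ((hS x).1 (p.trans ((hS y).2 hy) (p.symm h))))
  · rw [dif_neg hx, dif_neg hy, Option.some_inj]
    constructor
    · intro h
      have h2 := Quotient.exact h
      exact h2
    · intro h
      exact Quotient.sound (h : (restrC S p) ⟨x, hx⟩ ⟨y, hy⟩)

lemma classOf_eq_iff (p : Setoid α) (a : α) (S : Finset α) :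
    classOf p a = S ↔ ∀ x, p a x ↔ x ∈ S := by
  constructor
  · intro h x
    rw [← h, mem_classOf]
  · intro h
    ext x
    rw [mem_classOf]
    exact h x

/-- the fiber over a block `S` of the element `a` -/
lemma fiber_card (μ : Multiset ℕ) (ha : a ∈ S) (hj : S.card ∈ μ) :
    (univ.filter fun p : Setoid α => ptype p = μ ∧ classOf p a = S).card
      = (univ.filter fun q : Setoid {x : α // x ∉ S} =>
          ptype q = μ.erase S.card).card := by
  apply Finset.card_bij (fun p _ => restrC S p)
  · intro p hp
    simp only [mem_filter, mem_univ, true_and] at hp ⊢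
    obtain ⟨hpt, hcl⟩ := hp
    have hS := (classOf_eq_iff p a S).1 hcl
    have := ptype_decomp hS ha
    rw [hpt] at this
    rw [← Multiset.erase_cons_head S.card (ptype (restrC S p)), ← this]
  · intro p hp p' hp' h
    simp only [mem_filter, mem_univ, true_and] at hp hp'
    have hSp := (classOf_eq_iff p a S).1 hp.2
    have hSp' := (classOf_eq_iff p' a S).1 hp'.2
    rw [← glueC_restrC hSp, ← glueC_restrC hSp', h]
  · intro q hq
    simp only [mem_filter, mem_univ, true_and] at hq
    refine ⟨glueC S q, ?_, restrC_glueC S q⟩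
    simp only [mem_filter, mem_univ, true_and]
    have hcl : classOf (glueC S q) a = S := by
      ext x
      rw [mem_classOf]
      exact glueC_rel_a ha q x
    refine ⟨?_, hcl⟩
    have hS := (classOf_eq_iff (glueC S q) a S).1 hcl
    rw [ptype_decomp hS ha, restrC_glueC, hq, Multiset.cons_erase hj]

end Count

section Count2
open scoped Classical
variable {α β : Type*}

/-- number of setoids of a given partition type -/
noncomputable def Npart (α : Type*) [Fintype α] (μ : Multiset ℕ) : ℕ :=
  (univ.filter fun p : Setoid α => ptype p = μ).card

lemma Npart_congr [Fintype α] [Fintype β] (e : α ≃ β) (μ : Multiset ℕ) :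
    Npart α μ = Npart β μ := by
  have := card_filter_setoid_congr e (· = μ) (fun _ => True)
  simpa only [and_true, Npart] using this

lemma card_subsets [Fintype α] (a : α) {j : ℕ} (hj : 1 ≤ j) :
    ((univ : Finset (Finset α)).filter fun S => a ∈ S ∧ S.card = j).card
      = (Fintype.card α - 1).choose (j - 1) := by
  have h1 : ((univ : Finset α).erase a).card = Fintype.card α - 1 := by
    rw [Finset.card_erase_of_mem (mem_univ a), Finset.card_univ]
  rw [← h1, ← Finset.card_powersetCard]
  apply Finset.card_bij (fun S _ => S.erase a)
  · intro S hS
    simp only [mem_filter, mem_univ, true_and] at hS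
    rw [Finset.mem_powersetCard]
    constructor
    · intro x hx
      simp only [mem_erase] at hx ⊢
      exact ⟨hx.1, mem_univ x⟩
    · rw [Finset.card_erase_of_mem hS.1, hS.2]
  · intro S hS S' hS' h
    simp only [mem_filter, mem_univ, true_and] at hS hS'
    rw [← Finset.insert_erase hS.1, ← Finset.insert_erase hS'.1, h]
  · intro T hT
    rw [Finset.mem_powersetCard] at hT
    have haT : a ∉ T := fun h => (Finset.mem_erase.1 (hT.1 h)).1 rfl
    refine ⟨insert a T, ?_, ?_⟩
    · simp only [mem_filter, mem_univ, true_and]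
      refine ⟨Finset.mem_insert_self a T, ?_⟩
      rw [Finset.card_insert_of_notMem haT, hT.2]
      omega
    · rw [Finset.erase_insert haT]

lemma prod_map_erase {μ : Multiset ℕ} {j : ℕ} (hj : j ∈ μ) (f : ℕ → ℕ) :
    (μ.map f).prod = f j * ((μ.erase j).map f).prod := by
  conv_lhs => rw [← Multiset.cons_erase hj]
  rw [Multiset.map_cons, Multiset.prod_cons]

lemma count_fact_erase {μ : Multiset ℕ} {j : ℕ} (hj : j ∈ μ) :
    ∏ i ∈ μ.toFinset, (μ.count i).factorial
      = μ.count j * ∏ i ∈ (μ.erase j).toFinset, ((μ.erase j).count i).factorial := by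
  have hm : 1 ≤ μ.count j := Multiset.count_pos.2 hj
  have hjt : j ∈ μ.toFinset := Multiset.mem_toFinset.2 hj
  have hLHS : ∏ i ∈ μ.toFinset, (μ.count i).factorial
      = (μ.count j).factorial * ∏ i ∈ μ.toFinset.erase j, (μ.count i).factorial :=
    (Finset.mul_prod_erase _ _ hjt).symm
  have hcong : ∏ i ∈ μ.toFinset.erase j, ((μ.erase j).count i).factorial
      = ∏ i ∈ μ.toFinset.erase j, (μ.count i).factorial := by
    apply Finset.prod_congr rfl
    intro i hi
    rw [Multiset.count_erase_of_ne (Finset.mem_erase.1 hi).1]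
  by_cases hm1 : μ.count j = 1
  · have hν : (μ.erase j).toFinset = μ.toFinset.erase j := by
      ext i
      simp only [Multiset.mem_toFinset, Finset.mem_erase]
      rcases eq_or_ne i j with rfl | hne
      · simp only [ne_eq, not_true_eq_false, false_and, iff_false]
        rw [← Multiset.count_pos, Multiset.count_erase_self, hm1]
        omega
      · rw [Multiset.count_pos.symm, Multiset.count_erase_of_ne hne, Multiset.count_pos]
        simp [hne]
    rw [hLHS, hν, hcong, hm1]
    simp [Nat.factorial_one]
  · have hν : (μ.erase j).toFinset = μ.toFinset := by
      ext i
      simp only [Multiset.mem_toFinset]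
      rcases eq_or_ne i j with rfl | hne
      · rw [← Multiset.count_pos, Multiset.count_erase_self, ← Multiset.count_pos]
        omega
      · rw [← Multiset.count_pos, Multiset.count_erase_of_ne hne, Multiset.count_pos]
    have hRHS : ∏ i ∈ (μ.erase j).toFinset, ((μ.erase j).count i).factorial
        = (μ.count j - 1).factorial
            * ∏ i ∈ μ.toFinset.erase j, (μ.count i).factorial := by
      rw [hν, ← Finset.mul_prod_erase _ _ hjt, Multiset.count_erase_self, hcong]
    rw [hLHS, hRHS]
    have : (μ.count j).factorial = μ.count j * (μ.count j - 1).factorial := by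
      obtain ⟨m, hm'⟩ : ∃ m, μ.count j = m + 1 := ⟨μ.count j - 1, by omega⟩
      rw [hm']
      simp [Nat.factorial_succ]
    rw [this, mul_assoc]

lemma sum_count_mul {μ : Multiset ℕ} : ∑ j ∈ μ.toFinset, j * μ.count j = μ.sum := by
  have := Finset.sum_multiset_map_count μ (id : ℕ → ℕ)
  rw [Multiset.map_id] at this
  rw [this]
  apply Finset.sum_congr rfl
  intro j _
  simp [mul_comm]

lemma countN : ∀ (μ : Multiset ℕ), 0 ∉ μ → ∀ (α : Type) [Fintype α], Fintype.card α = μ.sum →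
    Npart α μ * ((μ.map Nat.factorial).prod * ∏ j ∈ μ.toFinset, (μ.count j).factorial)
      = (μ.sum).factorial := by
  intro μ
  induction μ using Multiset.strongInductionOn with
  | ih μ IH =>
  intro h0 α inst hcard
  by_cases hμ : μ = 0
  · subst hμ
    have hα : IsEmpty α := Fintype.card_eq_zero_iff.1 (by simpa using hcard)
    have hall : ∀ p : Setoid α, ptype p = 0 := by
      intro p
      have hq : IsEmpty (Quotient p) :=
        ⟨fun c => Quotient.ind (motive := fun _ => False) (fun x => isEmptyElim x) c⟩
      rw [ptype, Finset.univ_eq_empty]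
      rfl
    have h1 : Npart α (0 : Multiset ℕ) = 1 := by
      rw [Npart, Finset.filter_true_of_mem (fun p _ => hall p), Finset.card_univ]
      exact Fintype.card_eq_one_iff.mpr
        ⟨⊥, fun q => Setoid.ext fun x y => isEmptyElim x⟩
    rw [h1]
    simp
  · -- main case
    have hpos : ∀ j ∈ μ, 1 ≤ j := by
      intro j hj
      rcases Nat.eq_zero_or_pos j with rfl | h
      · exact absurd hj h0
      · exact h
    have hn1 : 1 ≤ μ.sum := by
      obtain ⟨j, hj⟩ := Multiset.exists_mem_of_ne_zero hμ
      calc 1 ≤ j := hpos j hj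
        _ ≤ μ.sum := Multiset.single_le_sum (fun x _ => Nat.zero_le x) j hj
    have hnea : Nonempty α := Fintype.card_pos_iff.1 (by omega)
    obtain ⟨a⟩ := hnea
    set T := univ.filter (fun S : Finset α => a ∈ S ∧ S.card ∈ μ) with hTdef
    have step1 : Npart α μ = ∑ S ∈ T,
        (univ.filter fun p : Setoid α => ptype p = μ ∧ classOf p a = S).card := by
      rw [Npart, Finset.card_eq_sum_card_fiberwise (f := fun p => classOf p a) (t := T)
        (by
          intro p hp
          simp only [mem_coe, mem_filter, mem_univ, true_and] at hp
          rw [hTdef]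
          simp only [mem_coe, mem_filter, mem_univ, true_and]
          refine ⟨(mem_classOf p a a).2 (p.refl a), ?_⟩
          rw [card_classOf]
          exact hp ▸ cSize_mem_ptype p (Quotient.mk p a))]
      apply Finset.sum_congr rfl
      intro S _
      rw [Finset.filter_filter]
    have step2 : ∀ S ∈ T,
        (univ.filter fun p : Setoid α => ptype p = μ ∧ classOf p a = S).card
          = Npart (Fin (μ.sum - S.card)) (μ.erase S.card) := by
      intro S hS
      rw [hTdef, mem_filter] at hS
      rw [fiber_card μ hS.2.1 hS.2.2]
      have hcompl : Fintype.card {x : α // x ∉ S} = μ.sum - S.card := by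
        rw [← hcard]
        have := Fintype.card_subtype_compl (fun x => x ∈ S)
        rw [this, Fintype.card_coe]
      have h2 : (univ.filter fun q : Setoid {x : α // x ∉ S} =>
          ptype q = μ.erase S.card).card = Npart {x : α // x ∉ S} (μ.erase S.card) := rfl
      rw [h2, Npart_congr (Fintype.equivFin _), hcompl]
    rw [step1, Finset.sum_congr rfl step2]
    -- group by the cardinality of S
    rw [← Finset.sum_fiberwise_of_maps_to (g := Finset.card) (t := μ.toFinset)
      (by
        intro S hS
        rw [hTdef, mem_filter] at hS
        exact Multiset.mem_toFinset.2 hS.2.2)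
      (fun S => Npart (Fin (μ.sum - S.card)) (μ.erase S.card))]
    have step3 : ∀ j ∈ μ.toFinset,
        ∑ S ∈ T.filter (fun S => S.card = j), Npart (Fin (μ.sum - S.card)) (μ.erase S.card)
          = (μ.sum - 1).choose (j - 1) * Npart (Fin (μ.sum - j)) (μ.erase j) := by
      intro j hjt
      have hj : j ∈ μ := Multiset.mem_toFinset.1 hjt
      have hTj : T.filter (fun S => S.card = j)
          = univ.filter (fun S : Finset α => a ∈ S ∧ S.card = j) := by
        rw [hTdef, Finset.filter_filter]
        apply Finset.filter_congr
        intro S _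
        constructor
        · rintro ⟨⟨h1, _⟩, h3⟩
          exact ⟨h1, h3⟩
        · rintro ⟨h1, h3⟩
          exact ⟨⟨h1, h3 ▸ hj⟩, h3⟩
      rw [hTj]
      have hconst : ∀ S ∈ univ.filter (fun S : Finset α => a ∈ S ∧ S.card = j),
          Npart (Fin (μ.sum - S.card)) (μ.erase S.card)
            = Npart (Fin (μ.sum - j)) (μ.erase j) := by
        intro S hS
        simp only [mem_filter, mem_univ, true_and] at hS
        rw [hS.2]
      rw [Finset.sum_congr rfl hconst, Finset.sum_const, smul_eq_mul,
        card_subsets a (hpos j hj), hcard]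
    rw [Finset.sum_congr rfl step3, Finset.sum_mul]
    have per_j : ∀ j ∈ μ.toFinset,
        (μ.sum - 1).choose (j - 1) * Npart (Fin (μ.sum - j)) (μ.erase j)
            * ((μ.map Nat.factorial).prod * ∏ i ∈ μ.toFinset, (μ.count i).factorial)
          = j * μ.count j * (μ.sum - 1).factorial := by
      intro j hjt
      have hj : j ∈ μ := Multiset.mem_toFinset.1 hjt
      have hj1 : 1 ≤ j := hpos j hj
      have hjn : j ≤ μ.sum := Multiset.single_le_sum (fun x _ => Nat.zero_le x) j hj
      have hsumν : (μ.erase j).sum = μ.sum - j := by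
        have h := congrArg Multiset.sum (Multiset.cons_erase hj)
        rw [Multiset.sum_cons] at h
        omega
      have IHj := IH (μ.erase j) (Multiset.erase_lt.2 hj)
        (fun h => h0 (Multiset.mem_of_mem_erase h)) (Fin (μ.sum - j))
        (by rw [Fintype.card_fin, hsumν])
      rw [hsumν] at IHj
      have hfact : j.factorial = j * (j - 1).factorial := (Nat.mul_factorial_pred (by omega)).symm
      have hch : (μ.sum - 1).choose (j - 1) * (j - 1).factorial * (μ.sum - j).factorial
          = (μ.sum - 1).factorial := by
        have h2 := Nat.choose_mul_factorial_mul_factorial (show j - 1 ≤ μ.sum - 1 by omega)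
        rw [show μ.sum - 1 - (j - 1) = μ.sum - j by omega] at h2
        exact h2
      rw [prod_map_erase hj, count_fact_erase hj, hfact]
      calc (μ.sum - 1).choose (j - 1) * Npart (Fin (μ.sum - j)) (μ.erase j)
            * (j * (j - 1).factorial * ((μ.erase j).map Nat.factorial).prod
              * (μ.count j * ∏ i ∈ (μ.erase j).toFinset, ((μ.erase j).count i).factorial))
          = (j * μ.count j) * ((μ.sum - 1).choose (j - 1) * (j - 1).factorial)
              * (Npart (Fin (μ.sum - j)) (μ.erase j)
                * (((μ.erase j).map Nat.factorial).prod
                  * ∏ i ∈ (μ.erase j).toFinset, ((μ.erase j).count i).factorial)) := by ring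
        _ = (j * μ.count j) * ((μ.sum - 1).choose (j - 1) * (j - 1).factorial)
              * (μ.sum - j).factorial := by rw [IHj]
        _ = (j * μ.count j)
              * ((μ.sum - 1).choose (j - 1) * (j - 1).factorial * (μ.sum - j).factorial) := by
            ring
        _ = j * μ.count j * (μ.sum - 1).factorial := by rw [hch]
    rw [Finset.sum_congr rfl per_j, ← Finset.sum_mul]
    have : ∑ j ∈ μ.toFinset, j * μ.count j = μ.sum := sum_count_mul
    rw [this, Nat.mul_factorial_pred (by omega)]

end Count2

section Final
open scoped Classical

lemma fPart_denom (n : ℕ) (P : Nat.Partition n) :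
    ∏ j ∈ Finset.range (n + 1),
        ((j.factorial : ℚ) ^ (P.parts.count j) * ((P.parts.count j).factorial : ℚ))
      = ((P.parts.map Nat.factorial).prod
          * ∏ j ∈ P.parts.toFinset, (P.parts.count j).factorial : ℕ) := by
  have hsub : P.parts.toFinset ⊆ Finset.range (n + 1) := by
    intro j hj
    rw [Multiset.mem_toFinset] at hj
    have h1 : j ≤ n := by
      have := Multiset.single_le_sum (fun x _ => Nat.zero_le x) j hj
      rw [P.parts_sum] at this
      exact this
    rw [Finset.mem_range]
    omega
  rw [Finset.prod_mul_distrib, Nat.cast_mul, Nat.cast_multiset_prod, Multiset.map_map,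
    Nat.cast_prod]
  congr 1
  · rw [show Multiset.map ((fun m : ℕ => (m : ℚ)) ∘ Nat.factorial) P.parts
        = P.parts.map (fun j => (j.factorial : ℚ)) from rfl, Finset.prod_multiset_map_count]
    exact (Finset.prod_subset hsub (fun j _ hj => by
      rw [Multiset.mem_toFinset] at hj
      rw [Multiset.count_eq_zero_of_notMem hj, pow_zero])).symm
  · exact (Finset.prod_subset hsub (fun j _ hj => by
      rw [Multiset.mem_toFinset] at hj
      rw [Multiset.count_eq_zero_of_notMem hj, Nat.factorial_zero, Nat.cast_one])).symm

lemma Npart_eq_fPart (n : ℕ) (P : Nat.Partition n) :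
    (Npart (Fin n) P.parts : ℚ) = fPart n P := by
  have h0 : 0 ∉ P.parts := fun h => (P.parts_pos h).ne rfl
  have hcount := countN P.parts h0 (Fin n) (by rw [Fintype.card_fin, P.parts_sum])
  rw [P.parts_sum] at hcount
  have hWpos : 0 < (P.parts.map Nat.factorial).prod
      * ∏ j ∈ P.parts.toFinset, (P.parts.count j).factorial := by
    apply Nat.mul_pos
    · apply Multiset.prod_pos
      intro x hx
      rw [Multiset.mem_map] at hx
      obtain ⟨y, _, rfl⟩ := hx
      exact Nat.factorial_pos y
    · exact Finset.prod_pos fun i _ => Nat.factorial_pos _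
  rw [fPart, fPart_denom n P, eq_div_iff (by exact_mod_cast hWpos.ne')]
  exact_mod_cast hcount

/-- grouping setoids with `r` classes by their partition type -/
lemma group_by_type (n r : ℕ) (g : ℕ → ℕ) :
    ∑ p ∈ univ.filter (fun p : Setoid (Fin n) => Nat.card (Quotient p) = r),
        ((ptype p).map g).prod
      = ∑ P ∈ univ.filter (fun P : Nat.Partition n => Multiset.card P.parts = r),
          Npart (Fin n) P.parts * (P.parts.map g).prod := by
  have hpart : ∀ p : Setoid (Fin n), ∃ P : Nat.Partition n, P.parts = ptype p := by
    intro p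
    refine ⟨⟨ptype p, ?_, ?_⟩, rfl⟩
    · intro i hi
      rcases Nat.eq_zero_or_pos i with rfl | h
      · exact absurd hi (zero_not_mem_ptype p)
      · exact h
    · rw [ptype_sum, Fintype.card_fin]
  choose Pt hPt using hpart
  rw [← Finset.sum_fiberwise_of_maps_to (g := Pt)
    (t := univ.filter (fun P : Nat.Partition n => Multiset.card P.parts = r))
    (by
      intro p hp
      simp only [mem_filter, mem_univ, true_and] at hp ⊢
      rw [hPt p, ptype_card, hp])
    (fun p => ((ptype p).map g).prod)]
  apply Finset.sum_congr rfl
  intro P hP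
  simp only [mem_filter, mem_univ, true_and] at hP
  have hfib : (univ.filter (fun p : Setoid (Fin n) => Nat.card (Quotient p) = r)).filter
      (fun p => Pt p = P) = univ.filter (fun p : Setoid (Fin n) => ptype p = P.parts) := by
    ext p
    simp only [Finset.filter_filter, mem_filter, mem_univ, true_and]
    constructor
    · rintro ⟨_, h2⟩
      rw [← h2, hPt p]
    · intro h
      constructor
      · rw [← ptype_card, h, hP]
      · apply Nat.Partition.ext
        rw [hPt p, h]
  rw [hfib]
  rw [Finset.sum_congr rfl (fun p hp => by
    simp only [mem_filter, mem_univ, true_and] at hp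
    rw [hp]), Finset.sum_const, smul_eq_mul]
  rfl

/-- For `n, r ≥ 1` and `k ≥ 2`:
`T(n,k,r) = ∑_{λ ⊢ n, l(λ) = r} f_λ ∏_{i=1}^{r} (∑_{r'=1}^{λ_i} T(λ_i, k-1, r'))`,
the sum being over integer partitions of `n` of length `r`. -/
theorem T_recurrence_partitions (n r k : ℕ) (hn : 1 ≤ n) (hr : 1 ≤ r) (hk : 2 ≤ k) :
    (Tnum n k r : ℚ) =
      ∑ P ∈ Finset.univ.filter (fun P : Nat.Partition n => Multiset.card P.parts = r),
        fPart n P *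
          (P.parts.map fun i =>
            ((∑ r' ∈ Finset.Icc 1 i, Tnum i (k - 1) r' : ℕ) : ℚ)).prod := by
  have hk1 : k = (k - 2) + 1 + 1 := by omega
  have hBB : ∀ i, (∑ r' ∈ Finset.Icc 1 i, Tnum i (k - 1) r') = BB (k - 2 + 1) i := by
    intro i
    rw [BB]
    have h2 : k - 1 = k - 2 + 1 := by omega
    rw [h2]
  have hA := lemA (k - 2 + 1) (Fin n) r
  rw [Fintype.card_fin, ← hk1] at hA
  have hprod : ∀ p : Setoid (Fin n),
      ∏ c : Quotient p, BB (k - 2 + 1) (cSize p c)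
        = ((ptype p).map (BB (k - 2 + 1))).prod := by
    intro p
    rw [ptype, Multiset.map_map]
    rfl
  rw [hA, Finset.sum_congr rfl (fun p _ => hprod p), group_by_type n r (BB (k - 2 + 1))]
  push_cast
  apply Finset.sum_congr rfl
  intro P hP
  rw [Npart_eq_fPart]
  congr 1
  rw [Multiset.map_map]
  apply congrArg Multiset.prod
  apply Multiset.map_congr rfl
  intro i _
  show ((BB (k - 2 + 1) i : ℕ) : ℚ) = _
  rw [← hBB i, Nat.cast_sum]



end Final
end
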